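/- arXiv:1801.06585 — 4 statements merged into one kernel-verified Lean document; each statement's English description precedes it below -/
import Mathlib

section
/- No zigzag in a triangulation contains a subsequence of the form e, e', ..., e', e (i.e., a zigzag cannot pass a pair of consecutive edges and later pass the same pair in reversed order). Consequently, no zigzag is self-reversed: Z ≠ Z⁻¹ for every zigzag Z. -/
open Finset

/-- A (combinatorial) triangulation of a connected closed surface:
a finite set of triangular faces such that every edge lies in exactly two
faces, two distinct faces meet in at most an edge, and the dual graph is
connected. -/
structure Triangulation (V : Type) [Fintype V] [DecidableEq V] where
  faces : Finset (Finset V)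
  faces_nonempty : faces.Nonempty
  card_eq : ∀ F ∈ faces, F.card = 3
  edge_two_faces : ∀ e : Finset V, e.card = 2 → (∃ F ∈ faces, e ⊆ F) →
      (faces.filter fun F => e ⊆ F).card = 2
  inter_le : ∀ F ∈ faces, ∀ F' ∈ faces, F ≠ F' → (F ∩ F').card ≤ 2
  connected : ∀ F ∈ faces, ∀ F' ∈ faces,
      Relation.ReflTransGen
        (fun A B => A ∈ faces ∧ B ∈ faces ∧ (A ∩ B).card = 2) F F'

namespace Triangulation

variable {V : Type} [Fintype V] [DecidableEq V] (T : Triangulation V)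

/-- `e` is an edge of the triangulation. -/
def IsEdge (e : Finset V) : Prop := e.card = 2 ∧ ∃ F ∈ T.faces, e ⊆ F

/-- A zigzag sequence: consecutive edges are adjacent (distinct, sharing a
vertex and a face), the faces containing consecutive pairs are distinct, and
edges two apart are disjoint. -/
def IsZigzagSeq (f : ℕ → Finset V) : Prop :=
  (∀ i, T.IsEdge (f i)) ∧
  (∀ i, f i ≠ f (i + 1) ∧ (f i ∩ f (i + 1)).Nonempty ∧
      ∃ F ∈ T.faces, f i ⊆ F ∧ f (i + 1) ⊆ F) ∧
  (∀ i, ∀ F ∈ T.faces, ∀ F' ∈ T.faces,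
      f i ⊆ F → f (i + 1) ⊆ F → f (i + 1) ⊆ F' → f (i + 2) ⊆ F' → F ≠ F') ∧
  (∀ i, f i ∩ f (i + 2) = ∅)

/-- A zigzag: a zigzag sequence together with its (minimal) period. -/
structure Zigzag where
  seq : ℕ → Finset V
  period : ℕ
  period_pos : 0 < period
  periodic : ∀ i, seq (i + period) = seq i
  period_min : ∀ m, 0 < m → (∀ i, seq (i + m) = seq i) → period ≤ m
  isZigzag : T.IsZigzagSeq seq

variable {T}

/-- Two zigzags are the same cyclic sequence (up to a shift). -/
def Zigzag.Equiv (Z Z' : T.Zigzag) : Prop := ∃ k, ∀ i, Z'.seq i = Z.seq (i + k)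

/-- `Z'` is the reversal of `Z` (up to a shift). -/
def Zigzag.IsReverseOf (Z' Z : T.Zigzag) : Prop :=
  ∃ k, ∀ i, Z'.seq i = Z.seq (k + Z.period - i % Z.period)

/-- The zigzag `Z` contains an edge of the face `F`. -/
def Zigzag.Meets (Z : T.Zigzag) (F : Finset V) : Prop := ∃ i, Z.seq i ⊆ F

/-- `F` is the `i`-th face of the face shadow of `Z`, i.e. the face containing
the `i`-th and `(i+1)`-st edges of `Z`. -/
def Zigzag.ShadowAt (Z : T.Zigzag) (i : ℕ) (F : Finset V) : Prop :=
  F ∈ T.faces ∧ Z.seq i ⊆ F ∧ Z.seq (i + 1) ⊆ F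

/-- At position `i`, the zigzag `Z` traverses the oriented edge from `x`
to `y` (the head `y` is the vertex shared with the next edge). -/
def Zigzag.Passes (Z : T.Zigzag) (i : ℕ) (x y : V) : Prop :=
  Z.seq i = {x, y} ∧ x ≠ y ∧ y ∈ Z.seq (i + 1)

variable (T)

/-- The triangulation is locally z-knotted in the face `F`:
`𝒵(F) = {Z, Z⁻¹}`. -/
def LocallyZKnotted (F : Finset V) : Prop :=
  (∃ Z : T.Zigzag, Z.Meets F) ∧
  ∀ Z Z' : T.Zigzag, Z.Meets F → Z'.Meets F → Z.Equiv Z' ∨ Z'.IsReverseOf Z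

/-- The triangulation is z-knotted: it has exactly one zigzag up to
reversal. -/
def ZKnotted : Prop :=
  Nonempty T.Zigzag ∧ ∀ Z Z' : T.Zigzag, Z.Equiv Z' ∨ Z'.IsReverseOf Z

/-- The z-monodromy relation of the face `F`: `M_F` sends the oriented edge
`(x,y)` of `F` to the oriented edge `(u,v)` of `F`.  Here `(u,v)` is the first
oriented edge of `F` occurring in the zigzag through `D_F⁻¹(x,y), (x,y)`
after `(x,y)`. -/
def MonodromyRel (F : Finset V) (x y u v : V) : Prop :=
  x ∈ F ∧ y ∈ F ∧
  ∃ Z : T.Zigzag, ∃ i j : ℕ,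
    (∃ z, z ∈ F ∧ z ≠ x ∧ z ≠ y ∧ Z.Passes i z x) ∧
    Z.Passes (i + 1) x y ∧
    i + 1 < j ∧ Z.Passes j u v ∧ u ∈ F ∧ v ∈ F ∧
    (∀ k, i + 1 < k → k < j → ∀ a b, a ∈ F → b ∈ F → ¬ Z.Passes k a b)

/-- The z-monodromy of `F` is the identity (type (M1)). -/
def MFIsId (F : Finset V) : Prop :=
  ∀ x y, x ∈ F → y ∈ F → x ≠ y → T.MonodromyRel F x y x y

/-- The z-monodromy of `F` is `D_F` (type (M2)). -/
def MFIsD (F : Finset V) : Prop :=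
  ∀ x y z : V, ({x, y, z} : Finset V) = F → x ≠ y → y ≠ z → x ≠ z →
    T.MonodromyRel F x y y z

/-- The z-monodromy of `F` is `D_F⁻¹` (type (M5)). -/
def MFIsDInv (F : Finset V) : Prop :=
  ∀ x y z : V, ({x, y, z} : Finset V) = F → x ≠ y → y ≠ z → x ≠ z →
    T.MonodromyRel F x y z x

/-- The z-monodromy of `F` is of type (M3):
`M_F = (-e₁,e₂,e₃)(-e₃,-e₂,e₁)` for a cycle `(e₁,e₂,e₃)` of `D_F`. -/
def MFIsM3 (F : Finset V) : Prop :=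
  ∃ x y z : V, ({x, y, z} : Finset V) = F ∧ x ≠ y ∧ y ≠ z ∧ x ≠ z ∧
    T.MonodromyRel F y x y z ∧ T.MonodromyRel F y z z x ∧
    T.MonodromyRel F z x y x ∧ T.MonodromyRel F x z z y ∧
    T.MonodromyRel F z y x y ∧ T.MonodromyRel F x y x z

/-- The z-monodromy of `F` is of type (M4):
`M_F = (e₁,-e₂)(e₂,-e₁)` with `e₃, -e₃` fixed, for a cycle `(e₁,e₂,e₃)`
of `D_F`. -/
def MFIsM4 (F : Finset V) : Prop :=
  ∃ x y z : V, ({x, y, z} : Finset V) = F ∧ x ≠ y ∧ y ≠ z ∧ x ≠ z ∧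
    T.MonodromyRel F x y z y ∧ T.MonodromyRel F z y x y ∧
    T.MonodromyRel F y z y x ∧ T.MonodromyRel F y x y z ∧
    T.MonodromyRel F z x z x ∧ T.MonodromyRel F x z x z

/-- The dual graph: vertices are faces, adjacent iff they share an edge. -/
def dualGraph : SimpleGraph {F : Finset V // F ∈ T.faces} where
  Adj A B := A ≠ B ∧ ((A : Finset V) ∩ (B : Finset V)).card = 2
  symm := by
    constructor
    intro A B h
    exact ⟨h.1.symm, by rw [Finset.inter_comm]; exact h.2⟩
  loopless := by constructor; intro A h; exact h.1 rfl

end Triangulation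

section Aux

variable {V : Type} [Fintype V] [DecidableEq V] {T : Triangulation V}

/-- Determinism: if `g` passes the pair `(f (b+1), f b)` (i.e. a pair of `f`
reversed), then its next edge is `f b`'s predecessor. -/
lemma zigzag_key_det {f g : ℕ → Finset V} (hf : T.IsZigzagSeq f)
    (hg : T.IsZigzagSeq g) (b n : ℕ)
    (h1 : g n = f (b + 2)) (h2 : g (n + 1) = f (b + 1)) :
    g (n + 2) = f b := by
  obtain ⟨ef, cf, df, jf⟩ := hf
  obtain ⟨eg, cg, dg, jg⟩ := hg
  obtain ⟨F, hF, hF1, hF2⟩ := (cf (b + 1)).2.2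
  obtain ⟨F₁, hF₁, h1a, h1b⟩ := (cf b).2.2
  obtain ⟨F₂, hF₂, h2a, h2b⟩ := (cg (n + 1)).2.2
  have hne1 : F₁ ≠ F := df b F₁ hF₁ F hF h1a h1b hF1 hF2
  have hne2 : F ≠ F₂ :=
    dg n F hF F₂ hF₂ (by rw [h1]; exact hF2) (by rw [h2]; exact hF1) h2a h2b
  have hcard := T.edge_two_faces (f (b + 1)) (ef (b + 1)).1 ⟨F, hF, hF1⟩
  obtain ⟨G₁, G₂, hGne, hfil⟩ := Finset.card_eq_two.mp hcard
  have mF : F ∈ ({G₁, G₂} : Finset (Finset V)) := by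
    rw [← hfil]; exact Finset.mem_filter.mpr ⟨hF, hF1⟩
  have mF1 : F₁ ∈ ({G₁, G₂} : Finset (Finset V)) := by
    rw [← hfil]; exact Finset.mem_filter.mpr ⟨hF₁, h1b⟩
  have mF2 : F₂ ∈ ({G₁, G₂} : Finset (Finset V)) := by
    rw [← hfil]; exact Finset.mem_filter.mpr ⟨hF₂, by rw [← h2]; exact h2a⟩
  have hF12 : F₁ = F₂ := by
    simp only [Finset.mem_insert, Finset.mem_singleton] at mF mF1 mF2
    rcases mF with h | h <;> rcases mF1 with h1' | h1' <;>
      rcases mF2 with h2' | h2' <;> simp_all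
  obtain ⟨a, ha⟩ := (cf (b + 1)).2.1
  rw [Finset.mem_inter] at ha
  have haF₁ : a ∈ F₁ := h1b ha.1
  have hcard1 : (F₁ \ {a}).card = 2 := by
    rw [Finset.card_sdiff_of_subset (Finset.singleton_subset_iff.mpr haF₁),
      T.card_eq F₁ hF₁, Finset.card_singleton]
  have hanb : a ∉ f b := by
    intro h
    have hmem : a ∈ f b ∩ f (b + 2) := Finset.mem_inter.mpr ⟨h, ha.2⟩
    rw [jf b] at hmem
    exact absurd hmem (Finset.notMem_empty a)
  have hang : a ∉ g (n + 2) := by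
    intro h
    have hmem : a ∈ g n ∩ g (n + 2) :=
      Finset.mem_inter.mpr ⟨by rw [h1]; exact ha.2, h⟩
    rw [jg n] at hmem
    exact absurd hmem (Finset.notMem_empty a)
  have e1 : f b = F₁ \ {a} := by
    apply Finset.eq_of_subset_of_card_le
    · intro x hx
      refine Finset.mem_sdiff.mpr ⟨h1a hx, ?_⟩
      simp only [Finset.mem_singleton]
      exact fun hxa => hanb (hxa ▸ hx)
    · rw [hcard1, (ef b).1]
  have e2 : g (n + 2) = F₁ \ {a} := by
    apply Finset.eq_of_subset_of_card_le
    · intro x hx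
      refine Finset.mem_sdiff.mpr ⟨by rw [hF12]; exact h2b hx, ?_⟩
      simp only [Finset.mem_singleton]
      exact fun hxa => hang (hxa ▸ hx)
    · rw [hcard1, (eg (n + 2)).1]
  rw [e1, e2]

lemma zigzag_seq_mod_eq (Z : T.Zigzag) :
    ∀ x y : ℕ, x % Z.period = y % Z.period → Z.seq x = Z.seq y := by
  have hper : ∀ k x, Z.seq (x + k * Z.period) = Z.seq x := by
    intro k
    induction k with
    | zero => simp
    | succ k ih =>
      intro x
      rw [Nat.succ_mul, ← Nat.add_assoc, Z.periodic, ih]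
  intro x y h
  have hx : Z.seq x = Z.seq (x % Z.period) := by
    conv_lhs => rw [← Nat.mod_add_div' x Z.period]
    exact hper _ _
  have hy : Z.seq y = Z.seq (y % Z.period) := by
    conv_lhs => rw [← Nat.mod_add_div' y Z.period]
    exact hper _ _
  rw [hx, hy, h]

end Aux

/-- no zigzag contains a subsequence `e, e', …, e', e`;
consequently no zigzag is self-reversed. -/
theorem zigzag_not_self_reversed {V : Type} [Fintype V] [DecidableEq V]
    (T : Triangulation V) :
    (∀ Z : T.Zigzag, ∀ i j : ℕ, i < j →
      ¬ (Z.seq j = Z.seq (i + 1) ∧ Z.seq (j + 1) = Z.seq i)) ∧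
    (∀ Z : T.Zigzag, ¬ Z.IsReverseOf Z) := by
  have key : ∀ Z : T.Zigzag, ∀ i j : ℕ,
      Z.seq j = Z.seq (i + 1) → Z.seq (j + 1) = Z.seq i → False := by
    intro Z i j h1 h2
    obtain ⟨q, hq⟩ : ∃ q, Z.period = q + 1 :=
      ⟨Z.period - 1, by have := Z.period_pos; omega⟩
    have hmod := zigzag_seq_mod_eq Z
    have inv : ∀ m, Z.seq (j + m) = Z.seq (i + 1 + m * q) ∧
        Z.seq (j + m + 1) = Z.seq (i + m * q) := by
      intro m
      induction m with
      | zero => exact ⟨by simpa using h1, by simpa using h2⟩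
      | succ m ih =>
        obtain ⟨hA, hB⟩ := ih
        have step := zigzag_key_det Z.isZigzag Z.isZigzag (i + m * q + q) (j + m)
          (by
            rw [hA]
            apply hmod
            rw [show i + m * q + q + 2 = (i + 1 + m * q) + Z.period from by
              rw [hq]; ring]
            exact (Nat.add_mod_right _ _).symm)
          (by
            rw [hB]
            apply hmod
            rw [show i + m * q + q + 1 = (i + m * q) + Z.period from by
              rw [hq]; ring]
            exact (Nat.add_mod_right _ _).symm)
        constructor
        · have hj : j + (m + 1) = j + m + 1 := rfl
          rw [hj, hB]
          apply hmod
          rw [show i + 1 + (m + 1) * q = (i + m * q) + Z.period from by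
            rw [hq]; ring]
          exact (Nat.add_mod_right _ _).symm
        · have hj : j + (m + 1) + 1 = j + m + 2 := rfl
          rw [hj, show i + (m + 1) * q = i + m * q + q from by ring]
          exact step
    have rel : ∀ u v : ℕ, (u + v) % Z.period = (i + j + 1) % Z.period →
        Z.seq u = Z.seq v := by
      intro u v huv
      have h3 : Z.seq u = Z.seq (j + (u + j * q)) := by
        apply hmod
        rw [show j + (u + j * q) = u + j * Z.period from by rw [hq]; ring,
          Nat.add_mul_mod_self_right]
      have h4 := (inv (u + j * q)).1
      have h5 : Z.seq (i + 1 + (u + j * q) * q) = Z.seq v := by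
        apply hmod
        have c1 : (i + 1 + (u + j * q) * q) + (u + j * q + j)
            = (i + j + 1) + (u + j * q) * Z.period := by rw [hq]; ring
        have c2 : v + (u + j * q + j) = (u + v) + j * Z.period := by
          rw [hq]; ring
        have hcan : ((i + 1 + (u + j * q) * q) + (u + j * q + j)) % Z.period
            = (v + (u + j * q + j)) % Z.period := by
          rw [c1, c2, Nat.add_mul_mod_self_right, Nat.add_mul_mod_self_right,
            huv]
        exact Nat.ModEq.add_right_cancel' _ hcan
      exact h3.trans (h4.trans h5)
    obtain ⟨r, hr⟩ : ∃ r, (i + j + 1) % Z.period = r := ⟨_, rfl⟩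
    set w := r + Z.period + Z.period with hw
    have hwmod : w % Z.period = (i + j + 1) % Z.period := by
      rw [hw, Nat.add_mod_right, Nat.add_mod_right, ← hr,
        Nat.mod_mod_of_dvd _ dvd_rfl]
    have hpos := Z.period_pos
    rcases Nat.even_or_odd w with ⟨c, hc⟩ | ⟨c, hc⟩
    · have hc1 : 1 ≤ c := by omega
      have ht : Z.seq (c - 1) = Z.seq (c + 1) :=
        rel (c - 1) (c + 1)
          (by rw [show c - 1 + (c + 1) = w from by omega, hwmod])
      have hdisj := Z.isZigzag.2.2.2 (c - 1)
      rw [show c - 1 + 2 = c + 1 from by omega, ← ht,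
        Finset.inter_self] at hdisj
      have hcd := (Z.isZigzag.1 (c - 1)).1
      rw [hdisj] at hcd
      simp at hcd
    · have ht : Z.seq c = Z.seq (c + 1) :=
        rel c (c + 1) (by rw [show c + (c + 1) = w from by omega, hwmod])
      exact (Z.isZigzag.2.1 c).1 ht
  refine ⟨fun Z i j _ h => absurd (key Z i j h.1 h.2) not_false,
    fun Z hrev => ?_⟩
  obtain ⟨k, hk⟩ := hrev
  have hp2 : 2 ≤ Z.period := by
    by_contra h
    have h1 := Z.period_pos
    have hpe : Z.period = 1 := by omega
    have h0 := Z.periodic 0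
    rw [hpe] at h0
    exact (Z.isZigzag.2.1 0).1 h0.symm
  have h0 := hk 0
  have h1 := hk 1
  rw [Nat.zero_mod, Nat.sub_zero] at h0
  rw [Nat.mod_eq_of_lt (show 1 < Z.period by omega)] at h1
  exact key Z 0 (k + Z.period - 1) (by rw [← h1]) (by
    rw [show k + Z.period - 1 + 1 = k + Z.period from by omega, ← h0])
end

section
/- For every face F of a triangulation, the z-monodromy M_F is a well-defined permutation of the six oriented edges Ω(F) of F. -/
open Finset

namespace Triangulation

variable {V : Type} [Fintype V] [DecidableEq V] {T : Triangulation V}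

lemma inter_card_one {e e' : Finset V} (he : e.card = 2) (he' : e'.card = 2)
    (hne : e ≠ e') (hint : (e ∩ e').Nonempty) : ∃ a, e ∩ e' = {a} := by
  rw [← Finset.card_eq_one]
  rcases Finset.Nonempty.card_pos hint with h1
  by_contra h
  have h2 : (e ∩ e').card ≤ 2 := le_trans (Finset.card_le_card (Finset.inter_subset_left)) he.le
  have h22 : (e ∩ e').card = 2 := by omega
  have : e ∩ e' = e := Finset.eq_of_subset_of_card_le Finset.inter_subset_left (by omega)
  have : e ∩ e' = e' := Finset.eq_of_subset_of_card_le Finset.inter_subset_right (by omega)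
  exact hne (by rw [← ‹e ∩ e' = e›, ‹e ∩ e' = e'›])

lemma face_unique {e e' G G' : Finset V} (he : e.card = 2) (he' : e'.card = 2)
    (hne : e ≠ e') (hint : (e ∩ e').Nonempty)
    (hG : G ∈ T.faces) (hG' : G' ∈ T.faces)
    (h1 : e ⊆ G) (h2 : e' ⊆ G) (h1' : e ⊆ G') (h2' : e' ⊆ G') : G = G' := by
  obtain ⟨a, ha⟩ := inter_card_one he he' hne hint
  have hcard : (e ∪ e').card = 3 := by
    have := Finset.card_union_add_card_inter e e'
    rw [ha] at this; simp at this; omega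
  have hu : e ∪ e' ⊆ G := Finset.union_subset h1 h2
  have hu' : e ∪ e' ⊆ G' := Finset.union_subset h1' h2'
  have hGc := T.card_eq G hG
  have hGc' := T.card_eq G' hG'
  rw [← Finset.eq_of_subset_of_card_le hu (by omega),
      ← Finset.eq_of_subset_of_card_le hu' (by omega)]

/-- among any three faces containing an edge, if two are ≠ the third, they agree -/
lemma face_eq_of_ne {e G1 G2 G3 : Finset V} (he : T.IsEdge e)
    (hG1 : G1 ∈ T.faces) (hG2 : G2 ∈ T.faces) (hG3 : G3 ∈ T.faces)
    (h1 : e ⊆ G1) (h2 : e ⊆ G2) (h3 : e ⊆ G3)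
    (h13 : G1 ≠ G3) (h23 : G2 ≠ G3) : G1 = G2 := by
  have hc := T.edge_two_faces e he.1 he.2
  obtain ⟨A, B, hAB, hs⟩ := Finset.card_eq_two.1 hc
  have m1 : G1 ∈ T.faces.filter (fun F => e ⊆ F) := Finset.mem_filter.2 ⟨hG1, h1⟩
  have m2 : G2 ∈ T.faces.filter (fun F => e ⊆ F) := Finset.mem_filter.2 ⟨hG2, h2⟩
  have m3 : G3 ∈ T.faces.filter (fun F => e ⊆ F) := Finset.mem_filter.2 ⟨hG3, h3⟩
  rw [hs] at m1 m2 m3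
  simp only [Finset.mem_insert, Finset.mem_singleton] at m1 m2 m3
  rcases m1 with rfl | rfl <;> rcases m2 with rfl | rfl <;> rcases m3 with h | h <;>
    first | rfl | (exfalso; tauto)

lemma other_face {e G : Finset V} (he : T.IsEdge e) (hG : G ∈ T.faces) (hs : e ⊆ G) :
    ∃ G', G' ∈ T.faces ∧ G' ≠ G ∧ e ⊆ G' := by
  have hc := T.edge_two_faces e he.1 he.2
  obtain ⟨A, B, hAB, hset⟩ := Finset.card_eq_two.1 hc
  have m1 : G ∈ T.faces.filter (fun F => e ⊆ F) := Finset.mem_filter.2 ⟨hG, hs⟩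
  have mA : A ∈ T.faces.filter (fun F => e ⊆ F) := by rw [hset]; simp
  have mB : B ∈ T.faces.filter (fun F => e ⊆ F) := by rw [hset]; simp
  rw [hset] at m1
  simp only [Finset.mem_insert, Finset.mem_singleton] at m1
  rcases m1 with rfl | rfl
  · exact ⟨B, (Finset.mem_filter.1 mB).1, hAB.symm, (Finset.mem_filter.1 mB).2⟩
  · exact ⟨A, (Finset.mem_filter.1 mA).1, hAB, (Finset.mem_filter.1 mA).2⟩

/-- Two adjacent edges. -/
def Adj2 (T : Triangulation V) (a b : Finset V) : Prop :=
  T.IsEdge a ∧ T.IsEdge b ∧ a ≠ b ∧ (a ∩ b).Nonempty ∧ ∃ F ∈ T.faces, a ⊆ F ∧ b ⊆ F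

/-- Three consecutive edges of a zigzag. -/
def Link (T : Triangulation V) (a b c : Finset V) : Prop :=
  T.Adj2 a b ∧ T.Adj2 b c ∧
  (∀ G ∈ T.faces, ∀ G' ∈ T.faces, a ⊆ G → b ⊆ G → b ⊆ G' → c ⊆ G' → G ≠ G') ∧
  a ∩ c = ∅

lemma Adj2.symm {a b : Finset V} (h : T.Adj2 a b) : T.Adj2 b a := by
  obtain ⟨h1, h2, h3, h4, F, hF, hs1, hs2⟩ := h
  exact ⟨h2, h1, h3.symm, by rwa [Finset.inter_comm], F, hF, hs2, hs1⟩

lemma Link.symm {a b c : Finset V} (h : T.Link a b c) : T.Link c b a := by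
  obtain ⟨h1, h2, h3, h4⟩ := h
  refine ⟨h2.symm, h1.symm, ?_, by rwa [Finset.inter_comm]⟩
  intro G hG G' hG' hc hb hb' ha heq
  exact h3 G' hG' G hG ha hb' hb hc heq.symm

end Triangulation
namespace Triangulation

variable {V : Type} [Fintype V] [DecidableEq V] {T : Triangulation V}

/-- the edge before a pair of adjacent edges in a zigzag is unique -/
lemma link_first_unique {a a' b c : Finset V} (h : T.Link a b c) (h' : T.Link a' b c) :
    a = a' := by
  obtain ⟨hab, hbc, h3, h4⟩ := h
  obtain ⟨hab', _, h3', h4'⟩ := h'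
  -- common vertex of b and c
  obtain ⟨v, hv⟩ := inter_card_one hbc.1.1 hbc.2.1.1 hbc.2.2.1 hbc.2.2.2.1
  have hvb : v ∈ b := by have : v ∈ b ∩ c := hv ▸ Finset.mem_singleton_self v
                         exact (Finset.mem_inter.1 this).1
  have hvc : v ∈ c := by have : v ∈ b ∩ c := hv ▸ Finset.mem_singleton_self v
                         exact (Finset.mem_inter.1 this).2
  -- b = {v, w}
  obtain ⟨w, hw, hwv⟩ : ∃ w, b = {v, w} ∧ w ≠ v := by
    obtain ⟨x, y, hxy, hb⟩ := Finset.card_eq_two.1 hbc.1.1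
    subst hb
    rcases Finset.mem_insert.1 hvb with rfl | h
    · exact ⟨y, rfl, hxy.symm⟩
    · rw [Finset.mem_singleton] at h; subst h
      exact ⟨x, by rw [Finset.pair_comm], hxy⟩
  have hwc : w ∉ c := by
    intro hc
    have : w ∈ b ∩ c := Finset.mem_inter.2 ⟨by simp [hw], hc⟩
    rw [hv, Finset.mem_singleton] at this; exact hwv this
  -- the common vertex of any predecessor and b is w
  have key : ∀ a₀ : Finset V, T.Adj2 a₀ b → a₀ ∩ c = ∅ → w ∈ a₀ ∧ v ∉ a₀ := by
    intro a₀ hadj hdisj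
    obtain ⟨p, hp⟩ := hadj.2.2.2.1
    have hpb : p ∈ b := (Finset.mem_inter.1 hp).2
    have hpa : p ∈ a₀ := (Finset.mem_inter.1 hp).1
    have hva : v ∉ a₀ := by
      intro hva
      have : v ∈ a₀ ∩ c := Finset.mem_inter.2 ⟨hva, hvc⟩
      rw [hdisj] at this; exact absurd this (Finset.notMem_empty v)
    have : p = v ∨ p = w := by rw [hw] at hpb; simpa using hpb
    rcases this with rfl | rfl
    · exact absurd hpa hva
    · exact ⟨hpa, hva⟩
  -- the face of (b,c)
  obtain ⟨G2, hG2, hbG2, hcG2⟩ := hbc.2.2.2.2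
  -- faces of (a,b) and (a',b)
  obtain ⟨G1, hG1, haG1, hbG1⟩ := hab.2.2.2.2
  obtain ⟨G1', hG1', haG1', hbG1'⟩ := hab'.2.2.2.2
  have hne1 : G1 ≠ G2 := h3 G1 hG1 G2 hG2 haG1 hbG1 hbG2 hcG2
  have hne1' : G1' ≠ G2 := h3' G1' hG1' G2 hG2 haG1' hbG1' hbG2 hcG2
  have hGG : G1 = G1' := face_eq_of_ne hab.2.1 hG1 hG1' hG2 hbG1 hbG1' hbG2 hne1 hne1'
  -- a and a' are both equal to insert w (G1 \ b)
  have main : ∀ a₀ : Finset V, T.Adj2 a₀ b → a₀ ∩ c = ∅ → a₀ ⊆ G1 → a₀ = insert w (G1 \ b) := by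
    intro a₀ hadj hdisj hsub
    obtain ⟨hwa, hva⟩ := key a₀ hadj hdisj
    have hsub2 : a₀ ⊆ insert w (G1 \ b) := by
      intro x hx
      rcases eq_or_ne x w with rfl | hxw
      · exact Finset.mem_insert_self _ _
      · refine Finset.mem_insert.2 (Or.inr (Finset.mem_sdiff.2 ⟨hsub hx, ?_⟩))
        intro hxb
        rw [hw] at hxb
        rcases Finset.mem_insert.1 hxb with rfl | hxs
        · exact hva hx
        · exact hxw (Finset.mem_singleton.1 hxs)
    refine Finset.eq_of_subset_of_card_le hsub2 ?_
    have : (G1 \ b).card = 1 := by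
      rw [Finset.card_sdiff_of_subset hbG1, T.card_eq G1 hG1, hbc.1.1]
    calc (insert w (G1 \ b)).card ≤ (G1 \ b).card + 1 := Finset.card_insert_le _ _
      _ ≤ 2 := by omega
      _ = a₀.card := (hadj.1.1).symm
  rw [main a hab h4 haG1, main a' hab' h4' (hGG ▸ haG1')]

/-- a pair of adjacent edges extends to a link -/
lemma exists_link {a b : Finset V} (h : T.Adj2 a b) : ∃ c, T.Link a b c := by
  obtain ⟨ha, hb, hne, hint, G1, hG1, haG1, hbG1⟩ := h
  obtain ⟨p, hp⟩ := inter_card_one ha.1 hb.1 hne hint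
  have hpb : p ∈ b := by
    have : p ∈ a ∩ b := hp ▸ Finset.mem_singleton_self p
    exact (Finset.mem_inter.1 this).2
  have hpa : p ∈ a := by
    have : p ∈ a ∩ b := hp ▸ Finset.mem_singleton_self p
    exact (Finset.mem_inter.1 this).1
  obtain ⟨q, hq, hqp⟩ : ∃ q, b = {p, q} ∧ q ≠ p := by
    obtain ⟨x, y, hxy, hbb⟩ := Finset.card_eq_two.1 hb.1
    subst hbb
    rcases Finset.mem_insert.1 hpb with rfl | h
    · exact ⟨y, rfl, hxy.symm⟩
    · rw [Finset.mem_singleton] at h; subst h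
      exact ⟨x, by rw [Finset.pair_comm], hxy⟩
  have hqa : q ∉ a := by
    intro hqa
    have : q ∈ a ∩ b := Finset.mem_inter.2 ⟨hqa, by simp [hq]⟩
    rw [hp, Finset.mem_singleton] at this; exact hqp this
  obtain ⟨G2, hG2, hG2ne, hbG2⟩ := other_face hb hG1 hbG1
  -- G1 ∩ G2 = b
  have hinter : G1 ∩ G2 = b := by
    have h1 : b ⊆ G1 ∩ G2 := Finset.subset_inter hbG1 hbG2
    have h2 : (G1 ∩ G2).card ≤ 2 := by
      have := T.inter_le G1 hG1 G2 hG2 hG2ne.symm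
      exact this
    exact (Finset.eq_of_subset_of_card_le h1 (by rw [hb.1]; exact h2)).symm
  obtain ⟨r, hr⟩ : ∃ r, G2 \ b = {r} := by
    rw [← Finset.card_eq_one, Finset.card_sdiff_of_subset hbG2, T.card_eq G2 hG2, hb.1]
  have hrG2 : r ∈ G2 := by
    have : r ∈ G2 \ b := hr ▸ Finset.mem_singleton_self r
    exact (Finset.mem_sdiff.1 this).1
  have hrb : r ∉ b := by
    have : r ∈ G2 \ b := hr ▸ Finset.mem_singleton_self r
    exact (Finset.mem_sdiff.1 this).2
  have hrG1 : r ∉ G1 := by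
    intro hrG1
    exact hrb (hinter ▸ Finset.mem_inter.2 ⟨hrG1, hrG2⟩)
  have hqr : q ≠ r := fun h => hrb (h ▸ (by simp [hq] : q ∈ b))
  have hqG2 : q ∈ G2 := hbG2 (by simp [hq])
  refine ⟨{q, r}, ⟨ha, hb, hne, hint, G1, hG1, haG1, hbG1⟩, ?_, ?_, ?_⟩
  · -- Adj2 b {q,r}
    refine ⟨hb, ⟨Finset.card_pair hqr, G2, hG2, ?_⟩, ?_, ⟨q, ?_⟩, G2, hG2, hbG2, ?_⟩
    · intro x hx; rcases Finset.mem_insert.1 hx with rfl | hx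
      · exact hqG2
      · rw [Finset.mem_singleton] at hx; subst hx; exact hrG2
    · intro hbe; rw [hbe] at hrb; exact hrb (by simp)
    · exact Finset.mem_inter.2 ⟨by simp [hq], by simp⟩
    · intro x hx; rcases Finset.mem_insert.1 hx with rfl | hx
      · exact hqG2
      · rw [Finset.mem_singleton] at hx; subst hx; exact hrG2
  · -- distinct faces
    intro G hG G' hG' haG hbG hbG' hcG' heq
    have hG1eq : G = G1 := face_unique ha.1 hb.1 hne hint hG hG1 haG hbG haG1 hbG1
    have : r ∈ G' := hcG' (by simp)
    rw [← heq, hG1eq] at this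
    exact hrG1 this
  · -- a ∩ {q,r} = ∅
    rw [Finset.eq_empty_iff_forall_notMem]
    intro x hx
    obtain ⟨hxa, hxqr⟩ := Finset.mem_inter.1 hx
    rcases Finset.mem_insert.1 hxqr with rfl | hx'
    · exact hqa hxa
    · rw [Finset.mem_singleton] at hx'; subst hx'
      exact hrG1 (haG1 hxa)

end Triangulation
namespace Triangulation

variable {V : Type} [Fintype V] [DecidableEq V] {T : Triangulation V}

lemma Link.adj2_left {a b c : Finset V} (h : T.Link a b c) : T.Adj2 a b := h.1
lemma Link.adj2_right {a b c : Finset V} (h : T.Link a b c) : T.Adj2 b c := h.2.1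

lemma link_third_unique {a b c c' : Finset V} (h : T.Link a b c) (h' : T.Link a b c') :
    c = c' := link_first_unique h.symm h'.symm

open Classical in
noncomputable def nextE (T : Triangulation V) (a b : Finset V) : Finset V :=
  if h : T.Adj2 a b then (exists_link h).choose else ∅

lemma nextE_spec {a b : Finset V} (h : T.Adj2 a b) : T.Link a b (T.nextE a b) := by
  rw [nextE]
  rw [dif_pos h]; exact (exists_link h).choose_spec

/-- state sequence of the zigzag through the adjacent pair (a, b) -/
noncomputable def zst (T : Triangulation V) (a b : Finset V) : ℕ → Finset V × Finset V :=
  fun n => (fun p => (p.2, T.nextE p.1 p.2))^[n] (a, b)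

noncomputable def zs (T : Triangulation V) (a b : Finset V) : ℕ → Finset V :=
  fun n => (T.zst a b n).1

lemma zst_succ (a b : Finset V) (n : ℕ) :
    T.zst a b (n + 1) = ((T.zst a b n).2, T.nextE (T.zst a b n).1 (T.zst a b n).2) := by
  rw [zst, Function.iterate_succ_apply']; rfl

lemma zs_succ (a b : Finset V) (n : ℕ) : T.zs a b (n + 1) = (T.zst a b n).2 := by
  rw [zs, zst_succ]

lemma zst_eq (a b : Finset V) (n : ℕ) :
    T.zst a b n = (T.zs a b n, T.zs a b (n + 1)) := by
  rw [zs_succ]; rfl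

lemma zs_zero (a b : Finset V) : T.zs a b 0 = a := rfl
lemma zs_one (a b : Finset V) : T.zs a b 1 = b := rfl

lemma zs_two_eq (a b : Finset V) (n : ℕ) :
    T.zs a b (n + 2) = T.nextE (T.zs a b n) (T.zs a b (n + 1)) := by
  rw [zs_succ, zst_succ, zst_eq]

lemma zs_adj {a b : Finset V} (h : T.Adj2 a b) (n : ℕ) :
    T.Adj2 (T.zs a b n) (T.zs a b (n + 1)) := by
  induction n with
  | zero => exact h
  | succ n ih =>
    rw [zs_two_eq]
    exact (nextE_spec ih).adj2_right

lemma zs_link {a b : Finset V} (h : T.Adj2 a b) (n : ℕ) :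
    T.Link (T.zs a b n) (T.zs a b (n + 1)) (T.zs a b (n + 2)) := by
  rw [zs_two_eq]; exact nextE_spec (zs_adj h n)

lemma zs_isZigzag {a b : Finset V} (h : T.Adj2 a b) : T.IsZigzagSeq (T.zs a b) := by
  refine ⟨fun i => (zs_adj h i).1, fun i => ?_, fun i => (zs_link h i).2.2.1, fun i => (zs_link h i).2.2.2⟩
  obtain ⟨_, _, h3, h4, hf⟩ := zs_adj h i
  exact ⟨h3, h4, hf⟩

lemma zst_cancel {a b : Finset V} (h : T.Adj2 a b) (k m n : ℕ)
    (heq : T.zst a b (k + m) = T.zst a b (k + n)) : T.zst a b m = T.zst a b n := by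
  induction k with
  | zero => simpa using heq
  | succ k ih =>
    apply ih
    have e1 : k + 1 + m = (k + m) + 1 := by omega
    have e2 : k + 1 + n = (k + n) + 1 := by omega
    rw [e1, e2, zst_eq, zst_eq] at heq
    rw [zst_eq, zst_eq]
    have h1 : T.zs a b (k + m + 1) = T.zs a b (k + n + 1) := (Prod.mk.injEq _ _ _ _ ▸ heq).1
    have h2 : T.zs a b (k + m + 2) = T.zs a b (k + n + 2) := by
      have := (Prod.mk.injEq _ _ _ _ ▸ heq).2
      simpa [show k + m + 1 + 1 = k + m + 2 by omega, show k + n + 1 + 1 = k + n + 2 by omega]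
        using this
    have h0 : T.zs a b (k + m) = T.zs a b (k + n) := by
      apply link_first_unique (zs_link h (k + m))
      rw [h1, h2]
      exact zs_link h (k + n)
    rw [h0, h1]

lemma zst_add (a b : Finset V) (m n : ℕ) :
    T.zst a b (m + n) = (fun p => (p.2, T.nextE p.1 p.2))^[m] (T.zst a b n) := by
  show (fun p => (p.2, T.nextE p.1 p.2))^[m + n] (a, b) = _
  rw [Function.iterate_add_apply]
  rfl

lemma zs_exists_period {a b : Finset V} (h : T.Adj2 a b) :
    ∃ m, 0 < m ∧ ∀ i, T.zs a b (i + m) = T.zs a b i := by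
  obtain ⟨m, n, hmn, heq⟩ := Finite.exists_ne_map_eq_of_infinite (T.zst a b)
  rcases Nat.lt_or_ge m n with hlt | hge
  · refine ⟨n - m, by omega, fun i => ?_⟩
    have h0 : T.zst a b (n - m) = T.zst a b 0 := by
      apply zst_cancel h m
      simpa [show m + (n - m) = n by omega] using heq.symm
    have : T.zst a b (i + (n - m)) = T.zst a b i := by
      rw [zst_add, h0, ← zst_add, Nat.add_zero]
    rw [zs, this]; rfl
  · have hlt : n < m := by omega
    refine ⟨m - n, by omega, fun i => ?_⟩
    have h0 : T.zst a b (m - n) = T.zst a b 0 := by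
      apply zst_cancel h n
      simpa [show n + (m - n) = m by omega] using heq
    have : T.zst a b (i + (m - n)) = T.zst a b i := by
      rw [zst_add, h0, ← zst_add, Nat.add_zero]
    rw [zs, this]; rfl

open Classical in
noncomputable def mkZigzag {a b : Finset V} (h : T.Adj2 a b) : T.Zigzag where
  seq := T.zs a b
  period := Nat.find (zs_exists_period h)
  period_pos := (Nat.find_spec (zs_exists_period h)).1
  periodic := (Nat.find_spec (zs_exists_period h)).2
  period_min := fun m hm hp => Nat.find_min' _ ⟨hm, hp⟩
  isZigzag := zs_isZigzag h

lemma mkZigzag_seq {a b : Finset V} (h : T.Adj2 a b) : (mkZigzag h).seq = T.zs a b := rfl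

end Triangulation
namespace Triangulation

variable {V : Type} [Fintype V] [DecidableEq V] {T : Triangulation V}

lemma Zigzag.link (Z : T.Zigzag) (i : ℕ) :
    T.Link (Z.seq i) (Z.seq (i + 1)) (Z.seq (i + 2)) := by
  obtain ⟨h1, h2, h3, h4⟩ := Z.isZigzag
  obtain ⟨a1, a2, a3⟩ := h2 i
  obtain ⟨b1, b2, b3⟩ := h2 (i + 1)
  exact ⟨⟨h1 i, h1 (i + 1), a1, a2, a3⟩, ⟨h1 (i + 1), h1 (i + 2), b1, b2, b3⟩, h3 i, h4 i⟩

lemma Zigzag.adj (Z : T.Zigzag) (i : ℕ) : T.Adj2 (Z.seq i) (Z.seq (i + 1)) :=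
  (Z.link i).adj2_left

lemma Zigzag.seq_add_mul (Z : T.Zigzag) (i n : ℕ) :
    Z.seq (i + n * Z.period) = Z.seq i := by
  induction n with
  | zero => simp
  | succ n ih => rw [show i + (n + 1) * Z.period = (i + n * Z.period) + Z.period by ring,
      Z.periodic, ih]

/-- forward determinism -/
lemma seq_fwd_eq (Z Z' : T.Zigzag) (i k : ℕ) (h0 : Z.seq i = Z'.seq k)
    (h1 : Z.seq (i + 1) = Z'.seq (k + 1)) (d : ℕ) :
    Z.seq (i + d) = Z'.seq (k + d) ∧ Z.seq (i + d + 1) = Z'.seq (k + d + 1) := by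
  induction d with
  | zero => exact ⟨h0, h1⟩
  | succ d ih =>
    have e3 : Z.seq (i + d + 2) = Z'.seq (k + d + 2) := by
      apply link_third_unique (Z.link (i + d))
      rw [ih.1, ih.2]
      exact Z'.link (k + d)
    constructor
    · rw [show i + (d + 1) = i + d + 1 by omega, show k + (d + 1) = k + d + 1 by omega]
      exact ih.2
    · rw [show i + (d + 1) + 1 = i + d + 2 by omega, show k + (d + 1) + 1 = k + d + 2 by omega]
      exact e3

/-- backward determinism -/
lemma seq_bwd_eq (Z Z' : T.Zigzag) (i k : ℕ) (h0 : Z.seq i = Z'.seq k)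
    (h1 : Z.seq (i + 1) = Z'.seq (k + 1)) (d : ℕ) (hdi : d ≤ i) (hdk : d ≤ k) :
    Z.seq (i - d) = Z'.seq (k - d) ∧ Z.seq (i - d + 1) = Z'.seq (k - d + 1) := by
  induction d with
  | zero => constructor <;> simpa
  | succ d ih =>
    obtain ⟨p0, p1⟩ := ih (by omega) (by omega)
    have e0 : Z.seq (i - (d + 1)) = Z'.seq (k - (d + 1)) := by
      apply link_first_unique
      · have := Z.link (i - (d + 1))
        rwa [show i - (d + 1) + 1 = i - d by omega, show i - (d + 1) + 2 = i - d + 1 by omega]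
          at this
      · have := Z'.link (k - (d + 1))
        rw [show k - (d + 1) + 1 = k - d by omega, show k - (d + 1) + 2 = k - d + 1 by omega,
          ← p0, ← p1] at this
        exact this
    exact ⟨e0, by rw [show i - (d + 1) + 1 = i - d by omega,
      show k - (d + 1) + 1 = k - d by omega]; exact p0⟩

/-- every position of a zigzag has a passage -/
lemma Zigzag.exists_passes (Z : T.Zigzag) (i : ℕ) :
    ∃ u v, Z.Passes i u v ∧ u ∈ Z.seq i ∧ v ∈ Z.seq i := by
  obtain ⟨he, he', hne, hint, _⟩ := Z.adj i
  obtain ⟨v, hv⟩ := inter_card_one he.1 he'.1 hne hint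
  have hvi : v ∈ Z.seq i := by
    have : v ∈ Z.seq i ∩ Z.seq (i + 1) := hv ▸ Finset.mem_singleton_self v
    exact (Finset.mem_inter.1 this).1
  have hvi1 : v ∈ Z.seq (i + 1) := by
    have : v ∈ Z.seq i ∩ Z.seq (i + 1) := hv ▸ Finset.mem_singleton_self v
    exact (Finset.mem_inter.1 this).2
  obtain ⟨u, hu, huv⟩ : ∃ u, Z.seq i = {u, v} ∧ u ≠ v := by
    obtain ⟨x, y, hxy, hxyeq⟩ := Finset.card_eq_two.1 he.1
    rw [hxyeq] at hvi ⊢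
    rcases Finset.mem_insert.1 hvi with rfl | h
    · exact ⟨y, by rw [Finset.pair_comm], hxy.symm⟩
    · rw [Finset.mem_singleton] at h; subst h
      exact ⟨x, rfl, hxy⟩
  exact ⟨u, v, ⟨hu, huv, hvi1⟩, by simp [hu], hvi⟩

/-- the passage at a position is unique (across sequences agreeing there) -/
lemma passes_unique {Z Z' : T.Zigzag} {i k : ℕ} {u v u' v' : V}
    (h0 : Z.seq i = Z'.seq k) (h1 : Z.seq (i + 1) = Z'.seq (k + 1))
    (hp : Z.Passes i u v) (hp' : Z'.Passes k u' v') : u = u' ∧ v = v' := by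
  obtain ⟨he, he', hne, hint, _⟩ := Z.adj i
  obtain ⟨w, hw⟩ := inter_card_one he.1 he'.1 hne hint
  have hv : v = w := by
    have : v ∈ Z.seq i ∩ Z.seq (i + 1) :=
      Finset.mem_inter.2 ⟨by simp [hp.1], hp.2.2⟩
    rw [hw, Finset.mem_singleton] at this; exact this
  have hv' : v' = w := by
    have : v' ∈ Z.seq i ∩ Z.seq (i + 1) := by
      rw [h0, h1]
      exact Finset.mem_inter.2 ⟨by simp [hp'.1], hp'.2.2⟩
    rw [hw, Finset.mem_singleton] at this; exact this
  have hvv : v = v' := hv.trans hv'.symm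
  refine ⟨?_, hvv⟩
  have heq : ({u, v} : Finset V) = {u', v'} := by rw [← hp.1, h0, hp'.1]
  have hu' : u ∈ ({u', v'} : Finset V) := heq ▸ Finset.mem_insert_self u {v}
  rcases Finset.mem_insert.1 hu' with h | h
  · exact h
  · rw [Finset.mem_singleton] at h
    exact absurd (h.trans hvv.symm) hp.2.1

/-- a passage within F forces the edge inside F -/
lemma passes_subset {Z : T.Zigzag} {i : ℕ} {u v : V} {F : Finset V}
    (hp : Z.Passes i u v) (hu : u ∈ F) (hv : v ∈ F) : Z.seq i ⊆ F := by
  rw [hp.1]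
  intro x hx
  rcases Finset.mem_insert.1 hx with rfl | h
  · exact hu
  · rw [Finset.mem_singleton] at h; subst h; exact hv

lemma third_vertex {F : Finset V} (hF : F ∈ T.faces) {x y : V} (hx : x ∈ F) (hy : y ∈ F)
    (hxy : x ≠ y) : ∃ z, z ∈ F ∧ z ≠ x ∧ z ≠ y ∧ F = {x, y, z} ∧
      (∀ z', z' ∈ F → z' ≠ x → z' ≠ y → z' = z) := by
  have hcard := T.card_eq F hF
  obtain ⟨z, hz⟩ : ∃ z, F \ {x, y} = {z} := by
    rw [← Finset.card_eq_one, Finset.card_sdiff_of_subset (by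
      intro t ht
      rcases Finset.mem_insert.1 ht with rfl | h
      · exact hx
      · rw [Finset.mem_singleton] at h; subst h; exact hy), hcard,
      Finset.card_pair hxy]
  have hzF : z ∈ F := by
    have : z ∈ F \ {x, y} := hz ▸ Finset.mem_singleton_self z
    exact (Finset.mem_sdiff.1 this).1
  have hzxy : z ∉ ({x, y} : Finset V) := by
    have : z ∈ F \ {x, y} := hz ▸ Finset.mem_singleton_self z
    exact (Finset.mem_sdiff.1 this).2
  have hzx : z ≠ x := fun h => hzxy (by simp [h])
  have hzy : z ≠ y := fun h => hzxy (by simp [h])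
  have hFeq : F = {x, y, z} := by
    symm
    apply Finset.eq_of_subset_of_card_le
    · intro t ht
      rcases Finset.mem_insert.1 ht with rfl | ht
      · exact hx
      rcases Finset.mem_insert.1 ht with rfl | ht
      · exact hy
      rw [Finset.mem_singleton] at ht; subst ht; exact hzF
    · rw [hcard, Finset.card_insert_of_notMem (by simp [hxy, Ne.symm hzx]),
        Finset.card_insert_of_notMem (by simp [Ne.symm hzy]), Finset.card_singleton]
  refine ⟨z, hzF, hzx, hzy, hFeq, fun z' hz' hz'x hz'y => ?_⟩
  rw [hFeq] at hz'
  rcases Finset.mem_insert.1 hz' with rfl | h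
  · exact absurd rfl hz'x
  rcases Finset.mem_insert.1 h with rfl | h
  · exact absurd rfl hz'y
  · exact Finset.mem_singleton.1 h

end Triangulation
namespace Triangulation

variable {V : Type} [Fintype V] [DecidableEq V] {T : Triangulation V}

lemma pair_decomp {e : Finset V} (he : e.card = 2) {v : V} (hv : v ∈ e) :
    ∃ w, e = {v, w} ∧ w ≠ v := by
  obtain ⟨x, y, hxy, hxyeq⟩ := Finset.card_eq_two.1 he
  rw [hxyeq] at hv ⊢
  rcases Finset.mem_insert.1 hv with rfl | h
  · exact ⟨y, rfl, hxy.symm⟩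
  · rw [Finset.mem_singleton] at h; subst h
    exact ⟨x, by rw [Finset.pair_comm], hxy⟩

lemma link_next_mem {a b c : Finset V} (h : T.Link a b c) {v : V}
    (hvb : v ∈ b) (hva : v ∉ a) : v ∈ c := by
  by_contra hvc
  obtain ⟨w, hw, hwv⟩ := pair_decomp h.1.2.1.1 hvb
  -- b ∩ c is nonempty and avoids v, so w ∈ c
  obtain ⟨p, hp⟩ := h.2.1.2.2.2.1
  have hpb : p ∈ b := (Finset.mem_inter.1 hp).1
  have hpc : p ∈ c := (Finset.mem_inter.1 hp).2
  have hpw : p = w := by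
    rw [hw] at hpb
    rcases Finset.mem_insert.1 hpb with rfl | h'
    · exact absurd hpc hvc
    · exact Finset.mem_singleton.1 h'
  subst hpw
  -- a ∩ b is nonempty and avoids v, so p ∈ a
  obtain ⟨q, hq⟩ := h.1.2.2.2.1
  have hqa : q ∈ a := (Finset.mem_inter.1 hq).1
  have hqb : q ∈ b := (Finset.mem_inter.1 hq).2
  have hqp : q = p := by
    rw [hw] at hqb
    rcases Finset.mem_insert.1 hqb with rfl | h'
    · exact absurd hqa hva
    · exact Finset.mem_singleton.1 h'
  subst hqp
  have : q ∈ a ∩ c := Finset.mem_inter.2 ⟨hqa, hpc⟩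
  rw [h.2.2.2] at this
  exact absurd this (Finset.notMem_empty q)

lemma Zigzag.passes_shift {Z : T.Zigzag} {k : ℕ} {a b : V} (n : ℕ)
    (h : Z.Passes k a b) : Z.Passes (k + n * Z.period) a b := by
  refine ⟨by rw [Z.seq_add_mul]; exact h.1, h.2.1, ?_⟩
  rw [show k + n * Z.period + 1 = (k + 1) + n * Z.period by omega, Z.seq_add_mul]
  exact h.2.2

lemma Zigzag.passes_unshift {Z : T.Zigzag} {k : ℕ} {a b : V} (n : ℕ)
    (h : Z.Passes (k + n * Z.period) a b) : Z.Passes k a b := by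
  refine ⟨by rw [← Z.seq_add_mul k n]; exact h.1, h.2.1, ?_⟩
  have := h.2.2
  rwa [show k + n * Z.period + 1 = (k + 1) + n * Z.period by omega, Z.seq_add_mul] at this

lemma monodromy_exists_unique {F : Finset V} (hF : F ∈ T.faces) {x y : V}
    (hx : x ∈ F) (hy : y ∈ F) (hxy : x ≠ y) :
    ∃! uv : V × V, T.MonodromyRel F x y uv.1 uv.2 := by
  classical
  obtain ⟨z, hzF, hzx, hzy, hFeq, hzu⟩ := third_vertex hF hx hy hxy
  -- the starting adjacent pair
  have hsa : ({z, x} : Finset V) ⊆ F := by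
    intro t ht
    rcases Finset.mem_insert.1 ht with rfl | h
    · exact hzF
    · rw [Finset.mem_singleton] at h; subst h; exact hx
  have hsb : ({x, y} : Finset V) ⊆ F := by
    intro t ht
    rcases Finset.mem_insert.1 ht with rfl | h
    · exact hx
    · rw [Finset.mem_singleton] at h; subst h; exact hy
  have hadj : T.Adj2 {z, x} {x, y} := by
    refine ⟨⟨Finset.card_pair hzx, F, hF, hsa⟩, ⟨Finset.card_pair hxy, F, hF, hsb⟩, ?_, ?_,
      F, hF, hsa, hsb⟩
    · intro heq
      have : y ∈ ({z, x} : Finset V) := heq ▸ (by simp : y ∈ ({x, y} : Finset V))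
      rcases Finset.mem_insert.1 this with rfl | h
      · exact hzy rfl
      · rw [Finset.mem_singleton] at h; exact hxy h.symm
    · exact ⟨x, Finset.mem_inter.2 ⟨by simp, by simp⟩⟩
  set Z := mkZigzag hadj with hZ
  have hseq0 : Z.seq 0 = {z, x} := rfl
  have hseq1 : Z.seq 1 = {x, y} := rfl
  have hp0 : Z.Passes 0 z x := ⟨hseq0, hzx, by rw [hseq1]; simp⟩
  have hp1 : Z.Passes 1 x y := by
    refine ⟨hseq1, hxy, ?_⟩
    apply link_next_mem (Z.link 0)
    · rw [hseq1]; simp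
    · rw [hseq0]
      intro hmem
      rcases Finset.mem_insert.1 hmem with h | h
      · exact hzy h.symm
      · rw [Finset.mem_singleton] at h; exact hxy h.symm
  have hQ : ∃ k, 1 < k ∧ Z.seq k ⊆ F := by
    refine ⟨1 + Z.period, by have := Z.period_pos; omega, ?_⟩
    rw [Z.periodic 1, hseq1]; exact hsb
  set j := Nat.find hQ with hj
  obtain ⟨hj1, hjF⟩ := Nat.find_spec hQ
  obtain ⟨u, v, hpj, huj, hvj⟩ := Z.exists_passes j
  have huF : u ∈ F := hjF huj
  have hvF : v ∈ F := hjF hvj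
  have hrel : T.MonodromyRel F x y u v := by
    refine ⟨hx, hy, Z, 0, j, ⟨z, hzF, hzx, hzy, hp0⟩, hp1, hj1, hpj, huF, hvF, ?_⟩
    intro k hk1 hkj a b haF hbF hp
    have : Z.seq k ⊆ F := passes_subset hp haF hbF
    exact Nat.find_min hQ (by omega : k < j) ⟨hk1, this⟩
  refine ⟨(u, v), hrel, ?_⟩
  rintro ⟨u', v'⟩ ⟨_, _, Z', i', j', ⟨z', hz'F, hz'x, hz'y, hp0'⟩, hp1', hij', hpj', hu'F, hv'F, hcl'⟩
  have hz'z : z' = z := hzu z' hz'F hz'x hz'y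
  subst hz'z
  -- the sequences agree
  have h0 : Z.seq 0 = Z'.seq i' := by rw [hseq0, hp0'.1]
  have h1 : Z.seq 1 = Z'.seq (i' + 1) := by rw [hseq1, hp1'.1]
  have hfwd := seq_fwd_eq Z Z' 0 i' h0 h1
  -- j' = i' + j
  have hle : j' ≤ i' + j := by
    by_contra hlt
    push_neg at hlt
    refine hcl' (i' + j) (by omega) hlt u v huF hvF ⟨?_, hpj.2.1, ?_⟩
    · rw [← (hfwd j).1, Nat.zero_add]; exact hpj.1
    · rw [show i' + j + 1 = i' + (j + 1) by omega, ← (hfwd (j + 1)).1, Nat.zero_add]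
      exact hpj.2.2
  have hge : i' + j ≤ j' := by
    have hsub : Z'.seq j' ⊆ F := passes_subset hpj' hu'F hv'F
    have hjj : Z.seq (j' - i') ⊆ F := by
      rw [← Nat.zero_add (j' - i'), (hfwd (j' - i')).1,
        show i' + (j' - i') = j' by omega]
      exact hsub
    have : j ≤ j' - i' := Nat.find_min' hQ ⟨by omega, hjj⟩
    omega
  have hjj' : j' = i' + j := by omega
  subst hjj'
  have he0 : Z.seq j = Z'.seq (i' + j) := by rw [← (hfwd j).1, Nat.zero_add]
  have he1 : Z.seq (j + 1) = Z'.seq (i' + j + 1) := by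
    rw [show i' + j + 1 = i' + (j + 1) by omega, ← (hfwd (j + 1)).1, Nat.zero_add]
  obtain ⟨hu, hv⟩ := passes_unique he0 he1 hpj hpj'
  simp only [Prod.mk.injEq]
  exact ⟨hu.symm, hv.symm⟩

end Triangulation
namespace Triangulation

variable {V : Type} [Fintype V] [DecidableEq V] {T : Triangulation V}

lemma next_in_face {F : Finset V} (hF : F ∈ T.faces) {Z : T.Zigzag} {i j : ℕ}
    {x y z u v : V}
    (hFeq : F = {x, y, z}) (hp0 : Z.Passes i z x) (hp1 : Z.Passes (i + 1) x y)
    (hij : i + 1 < j) (hpj : Z.Passes j u v) (huF : u ∈ F) (hvF : v ∈ F)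
    (hcl : ∀ k, i + 1 < k → k < j → ∀ a b, a ∈ F → b ∈ F → ¬ Z.Passes k a b) :
    Z.seq (j + 1) ⊆ F := by
  have hsubj : Z.seq j ⊆ F := passes_subset hpj huF hvF
  have hedgej : T.IsEdge (Z.seq j) := Z.isZigzag.1 j
  obtain ⟨G, hG, hjG, hj1G⟩ := (Z.adj j).2.2.2.2
  suffices hGF : G = F by rw [← hGF]; exact hj1G
  by_contra hGF
  set k := j - 1 with hk
  have hkj : k + 1 = j := by omega
  obtain ⟨G', hG', hkG', hjG'⟩ := by
    have h := (Z.adj k).2.2.2.2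
    rwa [hkj] at h
  have hGG' : G' ≠ G := by
    have hlink := Z.link k
    rw [hkj, show k + 2 = j + 1 by omega] at hlink
    exact hlink.2.2.1 G' hG' G hG hkG' hjG' hjG hj1G
  have hG'F : G' = F :=
    face_eq_of_ne hedgej hG' hF hG hjG' hsubj hjG hGG' (Ne.symm hGF)
  have hkF : Z.seq k ⊆ F := hG'F ▸ hkG'
  obtain ⟨a, b, hpk, hak, hbk⟩ := Z.exists_passes k
  have hki : i + 1 ≤ k := by omega
  rcases Nat.lt_or_ge (i + 1) k with hlt | hge
  · exact hcl k hlt (by omega) a b (hkF hak) (hkF hbk) hpk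
  · -- k = i + 1
    have hki1 : k = i + 1 := by omega
    have hdisj : Z.seq i ∩ Z.seq (i + 2) = ∅ := Z.isZigzag.2.2.2 i
    have hji2 : Z.seq (i + 2) = Z.seq j := by rw [← hkj, hki1]
    have hmem : ∀ w : V, w ∈ Z.seq j → w = y := by
      intro w hw
      have hwF : w ∈ F := hsubj hw
      have hwi : w ∉ Z.seq i := by
        intro hwi
        have : w ∈ Z.seq i ∩ Z.seq (i + 2) := Finset.mem_inter.2 ⟨hwi, hji2 ▸ hw⟩
        rw [hdisj] at this; exact absurd this (Finset.notMem_empty w)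
      rw [hp0.1] at hwi
      have hwz : w ≠ z := fun h => hwi (by simp [h])
      have hwx : w ≠ x := fun h => hwi (by simp [h])
      rw [hFeq] at hwF
      rcases Finset.mem_insert.1 hwF with rfl | h
      · exact absurd rfl hwx
      rcases Finset.mem_insert.1 h with rfl | h
      · rfl
      · exact absurd (Finset.mem_singleton.1 h) hwz
    have hu : u = y := hmem u (by rw [hpj.1]; simp)
    have hv : v = y := hmem v (by rw [hpj.1]; simp)
    exact hpj.2.1 (hu.trans hv.symm)

lemma monodromy_inj {F : Finset V} (hF : F ∈ T.faces) {x y x' y' u v : V}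
    (hx : x ∈ F) (hy : y ∈ F) (hx' : x' ∈ F) (hy' : y' ∈ F)
    (h1 : T.MonodromyRel F x y u v) (h2 : T.MonodromyRel F x' y' u v) :
    x = x' ∧ y = y' := by
  obtain ⟨-, -, Z1, i1, j1, ⟨z1, hz1F, hz1x, hz1y, hp10⟩, hp11, hij1, hp1j, huF, hvF, hcl1⟩ := h1
  obtain ⟨-, -, Z2, i2, j2, ⟨z2, hz2F, hz2x, hz2y, hp20⟩, hp21, hij2, hp2j, -, -, hcl2⟩ := h2
  have hxy : x ≠ y := hp11.2.1
  have hxy' : x' ≠ y' := hp21.2.1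
  have huv : u ≠ v := hp1j.2.1
  -- descriptions of F
  obtain ⟨w1, hw1F, hw1x, hw1y, hFeq1, hw1u⟩ := third_vertex hF hx hy hxy
  obtain ⟨w2, hw2F, hw2x, hw2y, hFeq2, hw2u⟩ := third_vertex hF hx' hy' hxy'
  have hz1w : z1 = w1 := hw1u z1 hz1F hz1x hz1y
  have hz2w : z2 = w2 := hw2u z2 hz2F hz2x hz2y
  subst hz1w; subst hz2w
  obtain ⟨t, htF, htu, htv, hFuv, htun⟩ := third_vertex hF huF hvF huv
  -- the edge after the passage (u,v) lies in F, hence equals {v, t}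
  have hdet : ∀ (Z : T.Zigzag) (j : ℕ), Z.Passes j u v → Z.seq (j + 1) ⊆ F →
      Z.seq j = {u, v} ∧ Z.seq (j + 1) = {v, t} := by
    intro Z j hpj hsub
    refine ⟨hpj.1, ?_⟩
    obtain ⟨w, hw, hwv⟩ := pair_decomp (Z.isZigzag.1 (j + 1)).1 hpj.2.2
    have hwF : w ∈ F := hsub (by rw [hw]; simp)
    have hwu : w ≠ u := by
      intro h
      subst h
      have : Z.seq j = Z.seq (j + 1) := by
        rw [hpj.1, hw, Finset.pair_comm]
      exact (Z.adj j).2.2.1 this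
    have : w = t := htun w hwF hwu hwv
    rw [hw, this]
  have hd1 := hdet Z1 j1 hp1j
    (next_in_face hF hFeq1 hp10 hp11 hij1 hp1j huF hvF hcl1)
  have hd2 := hdet Z2 j2 hp2j
    (next_in_face hF hFeq2 hp20 hp21 hij2 hp2j huF hvF hcl2)
  -- shift both witnesses far enough
  have hper1 := Z1.period_pos
  have hper2 := Z2.period_pos
  set N1 := j2 + 1 with hN1
  set i1' := i1 + N1 * Z1.period with hi1'
  set j1' := j1 + N1 * Z1.period with hj1'
  have hN1le : N1 ≤ N1 * Z1.period := Nat.le_mul_of_pos_right _ hper1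
  set N2 := j1' + 1 with hN2
  set i2' := i2 + N2 * Z2.period with hi2'
  set j2' := j2 + N2 * Z2.period with hj2'
  have hN2le : N2 ≤ N2 * Z2.period := Nat.le_mul_of_pos_right _ hper2
  set d1 := j1 - (i1 + 1) with hd1def
  set d2 := j2 - (i2 + 1) with hd2def
  have hb1 : d1 ≤ j1' ∧ d1 ≤ j2' ∧ d2 ≤ j1' ∧ d2 ≤ j2' := by
    refine ⟨by omega, by omega, by omega, by omega⟩
  -- shifted clauses
  have hcl1' : ∀ k, i1' + 1 < k → k < j1' → ∀ a b, a ∈ F → b ∈ F → ¬ Z1.Passes k a b := by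
    intro k hk1 hk2 a b ha hb hp
    have hk3 : N1 * Z1.period ≤ k := by omega
    have hp' : Z1.Passes (k - N1 * Z1.period) a b := by
      apply Z1.passes_unshift N1
      rwa [show k - N1 * Z1.period + N1 * Z1.period = k by omega]
    exact hcl1 (k - N1 * Z1.period) (by omega) (by omega) a b ha hb hp'
  have hcl2' : ∀ k, i2' + 1 < k → k < j2' → ∀ a b, a ∈ F → b ∈ F → ¬ Z2.Passes k a b := by
    intro k hk1 hk2 a b ha hb hp
    have hk3 : N2 * Z2.period ≤ k := by omega
    have hp' : Z2.Passes (k - N2 * Z2.period) a b := by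
      apply Z2.passes_unshift N2
      rwa [show k - N2 * Z2.period + N2 * Z2.period = k by omega]
    exact hcl2 (k - N2 * Z2.period) (by omega) (by omega) a b ha hb hp'
  -- sequences agree at the shifted endpoints
  have hs10 : Z1.seq j1' = {u, v} := by rw [hj1', Z1.seq_add_mul]; exact hd1.1
  have hs11 : Z1.seq (j1' + 1) = {v, t} := by
    rw [hj1', show j1 + N1 * Z1.period + 1 = (j1 + 1) + N1 * Z1.period by omega,
      Z1.seq_add_mul]; exact hd1.2
  have hs20 : Z2.seq j2' = {u, v} := by rw [hj2', Z2.seq_add_mul]; exact hd2.1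
  have hs21 : Z2.seq (j2' + 1) = {v, t} := by
    rw [hj2', show j2 + N2 * Z2.period + 1 = (j2 + 1) + N2 * Z2.period by omega,
      Z2.seq_add_mul]; exact hd2.2
  have hbwd := seq_bwd_eq Z1 Z2 j1' j2' (by rw [hs10, hs20]) (by rw [hs11, hs21])
  -- the distances back to the previous F-passage agree
  have hxyseq : Z1.seq (i1' + 1) = {x, y} := by
    rw [hi1', show i1 + N1 * Z1.period + 1 = (i1 + 1) + N1 * Z1.period by omega,
      Z1.seq_add_mul]; exact hp11.1
  have hxyseq' : Z2.seq (i2' + 1) = {x', y'} := by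
    rw [hi2', show i2 + N2 * Z2.period + 1 = (i2 + 1) + N2 * Z2.period by omega,
      Z2.seq_add_mul]; exact hp21.1
  have hdd : d1 = d2 := by
    by_contra hne
    rcases Nat.lt_or_ge d1 d2 with hlt | hge
    · -- an F-passage inside the forbidden window of Z2
      obtain ⟨a, b, hpk, hak, hbk⟩ := Z2.exists_passes (j2' - d1)
      have hkeq : Z2.seq (j2' - d1) = Z1.seq (j1' - d1) :=
        ((hbwd d1 hb1.1 hb1.2.1).1).symm
      have hkeq2 : Z1.seq (j1' - d1) = {x, y} := by
        rw [show j1' - d1 = i1' + 1 by omega]; exact hxyseq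
      have hsubF : Z2.seq (j2' - d1) ⊆ F := by
        rw [hkeq, hkeq2]
        intro w hw
        rcases Finset.mem_insert.1 hw with rfl | hw
        · exact hx
        · rw [Finset.mem_singleton] at hw; subst hw; exact hy
      exact hcl2' (j2' - d1) (by omega) (by omega) a b (hsubF hak) (hsubF hbk) hpk
    · have hlt : d2 < d1 := by omega
      obtain ⟨a, b, hpk, hak, hbk⟩ := Z1.exists_passes (j1' - d2)
      have hkeq : Z1.seq (j1' - d2) = Z2.seq (j2' - d2) :=
        (hbwd d2 hb1.2.2.1 hb1.2.2.2).1
      have hkeq2 : Z2.seq (j2' - d2) = {x', y'} := by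
        rw [show j2' - d2 = i2' + 1 by omega]; exact hxyseq'
      have hsubF : Z1.seq (j1' - d2) ⊆ F := by
        rw [hkeq, hkeq2]
        intro w hw
        rcases Finset.mem_insert.1 hw with rfl | hw
        · exact hx'
        · rw [Finset.mem_singleton] at hw; subst hw; exact hy'
      exact hcl1' (j1' - d2) (by omega) (by omega) a b (hsubF hak) (hsubF hbk) hpk
  -- conclude via uniqueness of the passage
  have heq0 : Z1.seq (i1' + 1) = Z2.seq (i2' + 1) := by
    have := (hbwd d1 hb1.1 (by omega)).1
    rwa [show j1' - d1 = i1' + 1 by omega, show j2' - d1 = i2' + 1 by omega] at this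
  have heq1 : Z1.seq (i1' + 1 + 1) = Z2.seq (i2' + 1 + 1) := by
    have := (hbwd d1 hb1.1 (by omega)).2
    rwa [show j1' - d1 + 1 = i1' + 1 + 1 by omega,
      show j2' - d1 + 1 = i2' + 1 + 1 by omega] at this
  have hp11' : Z1.Passes (i1' + 1) x y := by
    have := Z1.passes_shift N1 hp11
    rwa [show i1 + 1 + N1 * Z1.period = i1' + 1 by omega] at this
  have hp21' : Z2.Passes (i2' + 1) x' y' := by
    have := Z2.passes_shift N2 hp21
    rwa [show i2 + 1 + N2 * Z2.period = i2' + 1 by omega] at this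
  exact passes_unique heq0 heq1 hp11' hp21'

end Triangulation

/-- the z-monodromy `M_F` is a well-defined permutation of the
six oriented edges of the face `F`: for every oriented edge `(x,y)` of `F`
there is a unique image, and the assignment is injective. -/
theorem monodromy_is_permutation {V : Type} [Fintype V] [DecidableEq V]
    (T : Triangulation V) (F : Finset V) (hF : F ∈ T.faces) :
    (∀ x y : V, x ∈ F → y ∈ F → x ≠ y →
      ∃! uv : V × V, T.MonodromyRel F x y uv.1 uv.2) ∧
    (∀ x y x' y' u v : V, x ∈ F → y ∈ F → x' ∈ F → y' ∈ F →
      T.MonodromyRel F x y u v → T.MonodromyRel F x' y' u v →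
      x = x' ∧ y = y') := by
  constructor
  · intro x y hx hy hxy
    exact Triangulation.monodromy_exists_unique hF hx hy hxy
  · intro x y x' y' u v hx hy hx' hy' h1 h2
    exact Triangulation.monodromy_inj hF hx hy hx' hy' h1 h2
end

section
/- For every face F of a triangulation, the set Z(F) of zigzags containing edges of F consists of at most three pairs {Z, Z⁻¹} of mutually reversed zigzags. -/
open Finset

namespace ZigzagAux

open Finset Triangulation

variable {V : Type} [Fintype V] [DecidableEq V] (T : Triangulation V)

lemma eq_of_card_two {α : Type*} [DecidableEq α] {s : Finset α} (hs : s.card = 2) {x y z : α}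
    (hx : x ∈ s) (hy : y ∈ s) (hz : z ∈ s) (hyx : y ≠ x) (hzx : z ≠ x) : y = z := by
  obtain ⟨a, b, hab, rfl⟩ := Finset.card_eq_two.mp hs
  simp only [Finset.mem_insert, Finset.mem_singleton] at hx hy hz
  rcases hx with rfl | rfl <;> rcases hy with rfl | rfl <;> rcases hz with rfl | rfl <;> tauto

/-- The key uniqueness lemma: given an edge `b` lying in a face `G`,
any two card-2 sets lying in a face of `b` other than `G` and disjoint from a
set `a` meeting `b` must coincide. -/
lemma key {a b c c' G H H' : Finset V} (hb : b.card = 2)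
    (hG : G ∈ T.faces) (hbG : b ⊆ G)
    (hH : H ∈ T.faces) (hbH : b ⊆ H) (hHG : H ≠ G)
    (hH' : H' ∈ T.faces) (hbH' : b ⊆ H') (hH'G : H' ≠ G)
    (habn : (a ∩ b).Nonempty)
    (hc : c.card = 2) (hcH : c ⊆ H) (hac : a ∩ c = ∅)
    (hc' : c'.card = 2) (hcH' : c' ⊆ H') (hac' : a ∩ c' = ∅) : c = c' := by
  have hfil := T.edge_two_faces b hb ⟨G, hG, hbG⟩
  have hGf : G ∈ T.faces.filter fun F => b ⊆ F := Finset.mem_filter.mpr ⟨hG, hbG⟩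
  have hHf : H ∈ T.faces.filter fun F => b ⊆ F := Finset.mem_filter.mpr ⟨hH, hbH⟩
  have hH'f : H' ∈ T.faces.filter fun F => b ⊆ F := Finset.mem_filter.mpr ⟨hH', hbH'⟩
  have hHH' : H = H' := eq_of_card_two hfil hGf hHf hH'f hHG hH'G
  subst hHH'
  obtain ⟨u, hu⟩ := habn
  have hua : u ∈ a := (Finset.mem_inter.mp hu).1
  have hub : u ∈ b := (Finset.mem_inter.mp hu).2
  have huH : u ∈ H := hbH hub
  have hcard : (H.erase u).card = 2 := by
    rw [Finset.card_erase_of_mem huH, T.card_eq H hH]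
  have hkey : ∀ d : Finset V, d.card = 2 → d ⊆ H → a ∩ d = ∅ → d = H.erase u := by
    intro d hd hdH had
    have hud : u ∉ d := by
      intro hudm
      have : u ∈ a ∩ d := Finset.mem_inter.mpr ⟨hua, hudm⟩
      simp [had] at this
    have : d ⊆ H.erase u := fun w hw =>
      Finset.mem_erase.mpr ⟨fun h => hud (h ▸ hw), hdH hw⟩
    exact (Finset.eq_of_subset_of_card_le this (by omega)).symm.symm
  rw [hkey c hc hcH hac, hkey c' hc' hcH' hac']

section Steps

variable {f g : ℕ → Finset V}

lemma succ_step (hf : T.IsZigzagSeq f) (hg : T.IsZigzagSeq g) (i j : ℕ)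
    (h0 : f i = g j) (h1 : f (i + 1) = g (j + 1)) : f (i + 2) = g (j + 2) := by
  obtain ⟨hfE, hf2, hf3, hf4⟩ := hf
  obtain ⟨hgE, hg2, hg3, hg4⟩ := hg
  obtain ⟨hne, hnon, G, hG, haG, hbG⟩ := hf2 i
  obtain ⟨-, -, H, hH, hbH, hcH⟩ := hf2 (i + 1)
  obtain ⟨-, -, H', hH', hbH', hcH'⟩ := hg2 (j + 1)
  have hbH'2 : f (i + 1) ⊆ H' := by rw [h1]; exact hbH'
  have hHG : H ≠ G := (hf3 i G hG H hH haG hbG hbH hcH).symm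
  have hH'G : H' ≠ G :=
    (hg3 j G hG H' hH' (by rw [← h0]; exact haG) (by rw [← h1]; exact hbG) hbH' hcH').symm
  exact key T (hfE (i + 1)).1 hG hbG hH hbH hHG hH' hbH'2 hH'G hnon
    (hfE (i + 2)).1 hcH (hf4 i) ((hgE (j + 2)).1) hcH'
    (by rw [h0]; exact hg4 j)

lemma pred_step (hf : T.IsZigzagSeq f) (hg : T.IsZigzagSeq g) (i j : ℕ)
    (h1 : f (i + 1) = g (j + 1)) (h2 : f (i + 2) = g (j + 2)) : f i = g j := by
  obtain ⟨hfE, hf2, hf3, hf4⟩ := hf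
  obtain ⟨hgE, hg2, hg3, hg4⟩ := hg
  obtain ⟨hne, hnon, G, hG, hbG, hcG⟩ := hf2 (i + 1)
  obtain ⟨-, -, H, hH, haH, hbH⟩ := hf2 i
  obtain ⟨-, -, H', hH', haH', hbH'⟩ := hg2 j
  have hHG : H ≠ G := hf3 i H hH G hG haH hbH hbG hcG
  have hH'G : H' ≠ G :=
    hg3 j H' hH' G hG haH' hbH' (by rw [← h1]; exact hbG) (by rw [← h2]; exact hcG)
  have hnon' : (f (i + 2) ∩ f (i + 1)).Nonempty := by
    rwa [Finset.inter_comm]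
  have hfi : f i ∩ f (i + 2) = ∅ := hf4 i
  refine key T (hfE (i + 1)).1 hG hbG hH hbH hHG hH' (by rw [h1]; exact hbH') hH'G hnon'
    (hfE i).1 haH (by rwa [Finset.inter_comm] at hfi)
    (hgE j).1 haH' (by rw [h2, Finset.inter_comm]; exact hg4 j)

lemma rev_step (hf : T.IsZigzagSeq f) (hg : T.IsZigzagSeq g) (i j : ℕ)
    (h0 : f i = g (j + 2)) (h1 : f (i + 1) = g (j + 1)) : f (i + 2) = g j := by
  obtain ⟨hfE, hf2, hf3, hf4⟩ := hf
  obtain ⟨hgE, hg2, hg3, hg4⟩ := hg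
  obtain ⟨hne, hnon, G, hG, haG, hbG⟩ := hf2 i
  obtain ⟨-, -, H, hH, hbH, hcH⟩ := hf2 (i + 1)
  obtain ⟨-, -, H', hH', haH', hbH'⟩ := hg2 j
  have hHG : H ≠ G := (hf3 i G hG H hH haG hbG hbH hcH).symm
  have hH'G : H' ≠ G :=
    hg3 j H' hH' G hG haH' hbH' (by rw [← h1]; exact hbG) (by rw [← h0]; exact haG)
  exact key T (hfE (i + 1)).1 hG hbG hH hbH hHG hH' (by rw [h1]; exact hbH') hH'G hnon
    (hfE (i + 2)).1 hcH (hf4 i)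
    (hgE j).1 haH' (by rw [h0, Finset.inter_comm]; exact hg4 j)

lemma fwd_agree (hf : T.IsZigzagSeq f) (hg : T.IsZigzagSeq g) (i j : ℕ)
    (h0 : f i = g j) (h1 : f (i + 1) = g (j + 1)) :
    ∀ n, f (i + n) = g (j + n) ∧ f (i + n + 1) = g (j + n + 1) := by
  intro n
  induction n with
  | zero => exact ⟨h0, h1⟩
  | succ n ih => exact ⟨ih.2, succ_step T hf hg (i + n) (j + n) ih.1 ih.2⟩

lemma rev_agree (hf : T.IsZigzagSeq f) (hg : T.IsZigzagSeq g) (p : ℕ) (hp : 0 < p)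
    (hgp : ∀ s, g (s + p) = g s) (i j : ℕ)
    (h0 : f i = g (j + 1)) (h1 : f (i + 1) = g j) :
    ∀ t, f (i + t) = g (j + t * (p - 1) + 1) ∧ f (i + t + 1) = g (j + t * (p - 1)) := by
  intro t
  induction t with
  | zero => simpa using ⟨h0, h1⟩
  | succ t ih =>
    have hA1 : j + (t + 1) * (p - 1) = j + t * (p - 1) + p - 1 := by
      rw [add_one_mul]; omega
    have e0 : f (i + t) = g ((j + t * (p - 1) + p - 1) + 2) := by
      rw [ih.1]
      exact (by
        rw [show (j + t * (p - 1) + p - 1) + 2 = (j + t * (p - 1) + 1) + p by omega]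
        exact hgp _ : g ((j + t * (p - 1) + p - 1) + 2) = g (j + t * (p - 1) + 1)).symm
    have e1 : f (i + t + 1) = g ((j + t * (p - 1) + p - 1) + 1) := by
      rw [ih.2, show j + t * (p - 1) + p - 1 + 1 = j + t * (p - 1) + p by omega,
        hgp (j + t * (p - 1))]
    have e2 := rev_step T hf hg (i + t) (j + t * (p - 1) + p - 1) e0 e1
    constructor
    · rw [show i + (t + 1) = i + t + 1 from rfl, ih.2, hA1,
        show j + t * (p - 1) + p - 1 + 1 = j + t * (p - 1) + p by omega,
        hgp (j + t * (p - 1))]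
    · rw [show i + (t + 1) + 1 = i + t + 2 from rfl, e2, hA1]

lemma per_mul {p : ℕ} (hgp : ∀ s, g (s + p) = g s) : ∀ n s, g (s + n * p) = g s := by
  intro n
  induction n with
  | zero => simp
  | succ n ih =>
    intro s
    rw [Nat.succ_mul, ← Nat.add_assoc, hgp, ih]

lemma per_congr {p : ℕ} (hp : 0 < p) (hgp : ∀ s, g (s + p) = g s) {a b : ℕ}
    (hab : a % p = b % p) : g a = g b := by
  have hmod : ∀ c : ℕ, g c = g (c % p) := by
    intro c
    conv_lhs => rw [← Nat.mod_add_div' c p]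
    exact per_mul hgp (c / p) (c % p)
  rw [hmod a, hmod b, hab]

lemma per_ext (hf : T.IsZigzagSeq f) (p m : ℕ)
    (h : ∀ t, f (m + t + p) = f (m + t)) : ∀ s, f (s + p) = f s := by
  have aux : ∀ d, f (m - d + p) = f (m - d) ∧ f (m - d + 1 + p) = f (m - d + 1) := by
    intro d
    induction d with
    | zero =>
      refine ⟨by simpa using h 0, ?_⟩
      have := h 1
      rw [show m + 1 + p = m + 1 + p from rfl] at this
      simpa [Nat.add_right_comm] using this
    | succ d ih =>
      by_cases hd : d < m
      · have h1 : m - (d + 1) + 1 = m - d := by omega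
        have h2 : m - (d + 1) + 2 = m - d + 1 := by omega
        have hstep := pred_step T hf hf (m - (d + 1)) (m - (d + 1) + p)
          (by rw [h1, show m - (d+1) + p + 1 = m - d + p by omega]; exact ih.1.symm)
          (by rw [h2, show m - (d+1) + p + 2 = m - d + 1 + p by omega]; exact ih.2.symm)
        refine ⟨hstep.symm, ?_⟩
        rw [h1]
        exact ih.1
      · have h0 : m - (d + 1) = m - d := by omega
        rw [h0]
        exact ih
  intro s
  by_cases hs : m ≤ s
  · have := h (s - m)
    rwa [show m + (s - m) = s by omega] at this
  · have := (aux (m - s)).1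
    rwa [show m - (m - s) = s by omega] at this

end Steps

/-- Invariant for a pair of consecutive zigzag edges. -/
def Inv (p : Finset V × Finset V) : Prop :=
  T.IsEdge p.1 ∧ T.IsEdge p.2 ∧ p.1 ≠ p.2 ∧ (p.1 ∩ p.2).Nonempty ∧
    ∃ G ∈ T.faces, p.1 ⊆ G ∧ p.2 ⊆ G

/-- Specification of the next edge after the pair `(a, b)`. -/
def NS (a b c : Finset V) : Prop :=
  T.IsEdge c ∧ b ≠ c ∧ (b ∩ c).Nonempty ∧ (∃ H ∈ T.faces, b ⊆ H ∧ c ⊆ H) ∧ a ∩ c = ∅ ∧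
    ∀ G' ∈ T.faces, a ⊆ G' → b ⊆ G' → ∀ H'' ∈ T.faces, b ⊆ H'' → c ⊆ H'' → G' ≠ H''

lemma exists_next {a b : Finset V} (h : Inv T (a, b)) : ∃ c, NS T a b c := by
  obtain ⟨hE1, hE2, hab', habn', G, hG, haG', hbG'⟩ := h
  have ha2 : a.card = 2 := hE1.1
  have hb2 : b.card = 2 := hE2.1
  have hab : a ≠ b := hab'
  have habn : (a ∩ b).Nonempty := habn'
  have haG : a ⊆ G := haG'
  have hbG : b ⊆ G := hbG'
  obtain ⟨u, hu⟩ := habn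
  have hua : u ∈ a := (Finset.mem_inter.mp hu).1
  have hub : u ∈ b := (Finset.mem_inter.mp hu).2
  have hfil := T.edge_two_faces b hb2 ⟨G, hG, hbG⟩
  have hGf : G ∈ T.faces.filter fun F => b ⊆ F := Finset.mem_filter.mpr ⟨hG, hbG⟩
  obtain ⟨H, hHf, hHG⟩ := Finset.exists_mem_ne
    (show 1 < (T.faces.filter fun F => b ⊆ F).card by omega) G
  have hH : H ∈ T.faces := (Finset.mem_filter.mp hHf).1
  have hbH : b ⊆ H := (Finset.mem_filter.mp hHf).2
  have huH : u ∈ H := hbH hub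
  have hH3 : H.card = 3 := T.card_eq H hH
  obtain ⟨v, hvb, hvu⟩ := Finset.exists_mem_ne (by omega : 1 < b.card) u
  set c : Finset V := H.erase u with hc
  have hcH : c ⊆ H := Finset.erase_subset u H
  have hc2 : c.card = 2 := by rw [hc, Finset.card_erase_of_mem huH, hH3]
  have huc : u ∉ c := Finset.notMem_erase u H
  have hbc : b ≠ c := fun hbe => huc (hbe ▸ hub)
  have hvc : v ∈ c := Finset.mem_erase.mpr ⟨hvu, hbH hvb⟩
  have hacE : a ∩ c = ∅ := by
    rw [Finset.eq_empty_iff_forall_notMem]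
    intro w hw
    obtain ⟨hwa, hwe⟩ := Finset.mem_inter.mp hw
    obtain ⟨hwu, hwH⟩ := Finset.mem_erase.mp hwe
    have hwb : w ∉ b := by
      intro hwb
      have hsub : ({u, w} : Finset V) ⊆ a := by
        intro t ht
        simp only [Finset.mem_insert, Finset.mem_singleton] at ht
        rcases ht with rfl | rfl
        · exact hua
        · exact hwa
      have hsub' : ({u, w} : Finset V) ⊆ b := by
        intro t ht
        simp only [Finset.mem_insert, Finset.mem_singleton] at ht
        rcases ht with rfl | rfl
        · exact hub
        · exact hwb
      have h2 : ({u, w} : Finset V).card = 2 := Finset.card_pair (Ne.symm hwu)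
      exact hab (by
        rw [← Finset.eq_of_subset_of_card_le hsub (by omega),
          ← Finset.eq_of_subset_of_card_le hsub' (by omega)])
    have hins : insert w b ⊆ G ∩ H := by
      intro t ht
      rcases Finset.mem_insert.mp ht with rfl | htb
      · exact Finset.mem_inter.mpr ⟨haG hwa, hwH⟩
      · exact Finset.mem_inter.mpr ⟨hbG htb, hbH htb⟩
    have hcard : (insert w b).card = 3 := by
      rw [Finset.card_insert_of_notMem hwb, hb2]
    have hle := T.inter_le G hG H hH (Ne.symm hHG)
    have := Finset.card_le_card hins
    omega
  refine ⟨c, ⟨hc2, H, hH, hcH⟩, hbc, ⟨v, Finset.mem_inter.mpr ⟨hvb, hvc⟩⟩,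
    ⟨H, hH, hbH, hcH⟩, hacE, ?_⟩
  intro G' hG' haG' hbG' H'' hH'' hbH'' hcH'' hEq
  subst hEq
  have hcsub : c ⊂ b ∪ c := by
    refine Finset.ssubset_iff_of_subset Finset.subset_union_right |>.mpr
      ⟨u, Finset.mem_union_left c hub, huc⟩
  have hbc3 : 3 ≤ (b ∪ c).card := by
    have := Finset.card_lt_card hcsub
    omega
  have hun : b ∪ c ⊆ G' := Finset.union_subset hbG' hcH''
  have hG'3 : G'.card = 3 := T.card_eq G' hG'
  have hGeq : b ∪ c = G' := Finset.eq_of_subset_of_card_le hun (by omega)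
  have hasubb : a ⊆ b := by
    intro w hwa
    have hwbc : w ∈ b ∪ c := hGeq ▸ haG' hwa
    rcases Finset.mem_union.mp hwbc with hwb | hwc
    · exact hwb
    · exact absurd (Finset.mem_inter.mpr ⟨hwa, hwc⟩) (by simp [hacE])
  exact hab (Finset.eq_of_subset_of_card_le hasubb (by omega))

/-- One step of the zigzag: `(a, b) ↦ (b, c)`. -/
noncomputable def step (s : {p : Finset V × Finset V // Inv T p}) :
    {p : Finset V × Finset V // Inv T p} :=
  ⟨(s.1.2, Classical.choose (exists_next T s.2)), by
    obtain ⟨h1, h2, h3, h4, h5, h6⟩ := Classical.choose_spec (exists_next T s.2)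
    exact ⟨s.2.2.1, h1, h2, h3, h4⟩⟩

lemma step_ns (s : {p : Finset V × Finset V // Inv T p}) :
    NS T s.1.1 s.1.2 (step T s).1.2 :=
  Classical.choose_spec (exists_next T s.2)

lemma step_fst (s : {p : Finset V × Finset V // Inv T p}) :
    (step T s).1.1 = s.1.2 := rfl

/-- The edge sequence generated by iterating `step`. -/
noncomputable def seqOf (s₀ : {p : Finset V × Finset V // Inv T p}) (n : ℕ) : Finset V :=
  ((step T)^[n] s₀).1.1

lemma seqOf_succ (s₀ : {p : Finset V × Finset V // Inv T p}) (n : ℕ) :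
    seqOf T s₀ (n + 1) = ((step T)^[n] s₀).1.2 := by
  unfold seqOf
  rw [Function.iterate_succ_apply']
  rfl

lemma seqOf_zero (s₀ : {p : Finset V × Finset V // Inv T p}) : seqOf T s₀ 0 = s₀.1.1 := rfl

lemma seqOf_one (s₀ : {p : Finset V × Finset V // Inv T p}) : seqOf T s₀ 1 = s₀.1.2 :=
  seqOf_succ T s₀ 0

lemma isZigzag_seqOf (s₀ : {p : Finset V × Finset V // Inv T p}) :
    T.IsZigzagSeq (seqOf T s₀) := by
  have hseq2 : ∀ n, seqOf T s₀ (n + 2) = (step T ((step T)^[n] s₀)).1.2 := by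
    intro n
    rw [seqOf_succ T s₀ (n + 1), Function.iterate_succ_apply']
  have hinv : ∀ n, Inv T ((step T)^[n] s₀).1 := fun n => ((step T)^[n] s₀).2
  have hns : ∀ n, NS T (seqOf T s₀ n) (seqOf T s₀ (n + 1)) (seqOf T s₀ (n + 2)) := by
    intro n
    rw [hseq2, seqOf_succ]
    exact step_ns T ((step T)^[n] s₀)
  refine ⟨?_, ?_, ?_, ?_⟩
  · intro i
    exact (hinv i).1
  · intro i
    rw [seqOf_succ]
    obtain ⟨h1, h2, h3, h4, h5⟩ := hinv i
    exact ⟨h3, h4, h5⟩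
  · intro i F hF F' hF' h1 h2 h3 h4
    exact (hns i).2.2.2.2.2 F hF h1 h2 F' hF' h3 h4
  · intro i
    exact (hns i).2.2.2.2.1

lemma step_inj : Function.Injective (step T) := by
  intro s s' he
  have hb : s.1.2 = s'.1.2 := by rw [← step_fst T s, ← step_fst T s', he]
  have n1 := step_ns T s
  have n2 := step_ns T s'
  rw [← he, ← hb] at n2
  obtain ⟨hcE, hbc, hbcn, ⟨H₀, hH₀, hbH₀, hcH₀⟩, hac, hGH⟩ := n1
  obtain ⟨-, -, -, -, ha'c, hGH'⟩ := n2
  obtain ⟨haE, hbE, hab, habn, Ga, hGa, haGa, hbGa⟩ := s.2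
  obtain ⟨ha'E, hbE', ha'b, ha'bn, Ga', hGa', ha'Ga', hbGa'⟩ := s'.2
  have hbGa'2 : s.1.2 ⊆ Ga' := by rw [hb]; exact hbGa'
  have hGaH₀ : Ga ≠ H₀ := hGH Ga hGa haGa hbGa H₀ hH₀ hbH₀ hcH₀
  have hGa'H₀ : Ga' ≠ H₀ := hGH' Ga' hGa' ha'Ga' hbGa'2 H₀ hH₀ hbH₀ hcH₀
  have haa' : s.1.1 = s'.1.1 :=
    key T (a := (step T s).1.2) (b := s.1.2) (c := s.1.1) (c' := s'.1.1)
      (G := H₀) (H := Ga) (H' := Ga')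
      hbE.1 hH₀ hbH₀ hGa hbGa hGaH₀ hGa' hbGa'2 hGa'H₀
      (by rwa [Finset.inter_comm] at hbcn)
      haE.1 haGa (by rwa [Finset.inter_comm] at hac)
      ha'E.1 ha'Ga' (by rwa [Finset.inter_comm] at ha'c)
  apply Subtype.ext
  exact Prod.ext haa' hb

lemma exists_period (s₀ : {p : Finset V × Finset V // Inv T p}) :
    ∃ m, 0 < m ∧ ∀ i, seqOf T s₀ (i + m) = seqOf T s₀ i := by
  obtain ⟨x, y, hxy, hg⟩ :=
    Finite.exists_ne_map_eq_of_infinite (fun n => (step T)^[n] s₀)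
  wlog hlt : x < y generalizing x y
  · exact this y x hxy.symm hg.symm (by omega)
  have hret : (step T)^[y - x] s₀ = s₀ := by
    have h1 : (step T)^[x] ((step T)^[y - x] s₀) = (step T)^[x] s₀ := by
      rw [← Function.iterate_add_apply, show x + (y - x) = y by omega]
      exact hg.symm
    exact (step_inj T).iterate x h1
  refine ⟨y - x, by omega, ?_⟩
  intro i
  unfold seqOf
  rw [Function.iterate_add_apply, hret]

open Classical in
/-- The zigzag generated by a valid pair of edges. -/
noncomputable def mk (s₀ : {p : Finset V × Finset V // Inv T p}) : T.Zigzag where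
  seq := seqOf T s₀
  period := Nat.find (exists_period T s₀)
  period_pos := (Nat.find_spec (exists_period T s₀)).1
  periodic := (Nat.find_spec (exists_period T s₀)).2
  period_min := fun m hm hper => Nat.find_min' _ ⟨hm, hper⟩
  isZigzag := isZigzag_seqOf T s₀

lemma mk_seq_zero (s₀ : {p : Finset V × Finset V // Inv T p}) : (mk T s₀).seq 0 = s₀.1.1 :=
  rfl

lemma mk_seq_one (s₀ : {p : Finset V × Finset V // Inv T p}) : (mk T s₀).seq 1 = s₀.1.2 :=
  seqOf_one T s₀

lemma meets_pair (Z : T.Zigzag) (F : Finset V) (hF : F ∈ T.faces) (h : Z.Meets F) :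
    ∃ m, Z.seq m ⊆ F ∧ Z.seq (m + 1) ⊆ F := by
  obtain ⟨i, hi⟩ := h
  have hper := Z.period_pos
  obtain ⟨n, hn⟩ : ∃ n, n + 1 = i + Z.period := ⟨i + Z.period - 1, by omega⟩
  have hi' : Z.seq (n + 1) ⊆ F := by rw [hn, Z.periodic]; exact hi
  obtain ⟨hE, h2, h3, h4⟩ := Z.isZigzag
  obtain ⟨-, -, G, hG, h1G, h2G⟩ := h2 n
  obtain ⟨-, -, H, hH, h1H, h2H⟩ := h2 (n + 1)
  have hGH : G ≠ H := h3 n G hG H hH h1G h2G h1H h2H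
  have hfil := T.edge_two_faces (Z.seq (n + 1)) (hE (n + 1)).1 ⟨G, hG, h2G⟩
  have hFf : F ∈ T.faces.filter fun X => Z.seq (n + 1) ⊆ X := Finset.mem_filter.mpr ⟨hF, hi'⟩
  have hGf : G ∈ T.faces.filter fun X => Z.seq (n + 1) ⊆ X := Finset.mem_filter.mpr ⟨hG, h2G⟩
  have hHf : H ∈ T.faces.filter fun X => Z.seq (n + 1) ⊆ X := Finset.mem_filter.mpr ⟨hH, h1H⟩
  by_cases hFG : F = G
  · exact ⟨n, by rw [hFG]; exact h1G, hi'⟩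
  by_cases hFH : F = H
  · exact ⟨n + 1, hi', by rw [hFH]; exact h2H⟩
  exact absurd (eq_of_card_two hfil hFf hGf hHf (fun hh => hFG hh.symm) fun hh => hFH hh.symm)
    hGH

lemma edge_sub_cases {x y z : V} (hxy : x ≠ y) (hxz : x ≠ z) (hyz : y ≠ z)
    {s : Finset V} (hs : s.card = 2) (hsub : s ⊆ ({x, y, z} : Finset V)) :
    s = {x, y} ∨ s = {y, z} ∨ s = {x, z} := by
  obtain ⟨a, b, hab, rfl⟩ := Finset.card_eq_two.mp hs
  have ha : a ∈ ({x, y, z} : Finset V) := hsub (by simp)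
  have hb : b ∈ ({x, y, z} : Finset V) := hsub (by simp)
  simp only [Finset.mem_insert, Finset.mem_singleton] at ha hb
  rcases ha with rfl | rfl | rfl <;> rcases hb with rfl | rfl | rfl <;>
    first
      | exact absurd rfl hab
      | exact Or.inl rfl
      | exact Or.inl (Finset.pair_comm _ _)
      | exact Or.inr (Or.inl rfl)
      | exact Or.inr (Or.inl (Finset.pair_comm _ _))
      | exact Or.inr (Or.inr rfl)
      | exact Or.inr (Or.inr (Finset.pair_comm _ _))

lemma equiv_of (Z W : T.Zigzag) (m : ℕ) (h0 : W.seq 0 = Z.seq m)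
    (h1 : W.seq 1 = Z.seq (m + 1)) : Z.Equiv W := by
  refine ⟨m, fun i => ?_⟩
  have := (fwd_agree T W.isZigzag Z.isZigzag 0 m h0 h1 i).1
  rw [Nat.zero_add] at this
  rw [this, Nat.add_comm]

lemma rev_of (Z W : T.Zigzag) (m : ℕ) (h0 : Z.seq m = W.seq 1)
    (h1 : Z.seq (m + 1) = W.seq 0) : Z.IsReverseOf W := by
  set p := W.period with hpdef
  have hp : 0 < p := W.period_pos
  have hWper : ∀ s, W.seq (s + p) = W.seq s := fun s => W.periodic s
  have hrev := rev_agree T Z.isZigzag W.isZigzag p hp hWper m 0 h0 h1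
  have hrev1 : ∀ t, Z.seq (m + t) = W.seq (t * (p - 1) + 1) := by
    intro t
    have := (hrev t).1
    rwa [Nat.zero_add] at this
  have hge : ∀ t, Z.seq (m + t + p) = Z.seq (m + t) := by
    intro t
    have key1 : (t + p) * (p - 1) + 1 = (t * (p - 1) + 1) + (p - 1) * p := by
      have hq : (t + p) * (p - 1) = t * (p - 1) + p * (p - 1) := by ring
      have hq2 : p * (p - 1) = (p - 1) * p := by ring
      omega
    calc Z.seq (m + t + p) = Z.seq (m + (t + p)) := by rw [Nat.add_assoc]
      _ = W.seq ((t + p) * (p - 1) + 1) := hrev1 (t + p)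
      _ = W.seq ((t * (p - 1) + 1) + (p - 1) * p) := by rw [key1]
      _ = W.seq (t * (p - 1) + 1) := per_mul hWper (p - 1) _
      _ = Z.seq (m + t) := (hrev1 t).symm
  have hZper : ∀ s, Z.seq (s + p) = Z.seq s := per_ext T Z.isZigzag p m hge
  refine ⟨m + 1, fun i => ?_⟩
  set r := i % p with hrdef
  have hr : r < p := Nat.mod_lt _ hp
  have hmp : m + 1 ≤ (m + 1) * p := Nat.le_mul_of_pos_right _ hp
  set t := r + (m + 1) * p - m with htdef
  have htm : t + m = r + (m + 1) * p := by omega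
  have e1 : Z.seq i = Z.seq (m + t) := by
    refine per_congr hp hZper ?_
    rw [show m + t = r + (m + 1) * p by omega, Nat.add_mul_mod_self_right,
      Nat.mod_eq_of_lt hr]
  have e2 : Z.seq (m + t) = W.seq (t * (p - 1) + 1) := hrev1 t
  have e3 : W.seq (t * (p - 1) + 1) = W.seq (m + 1 + p - i % p) := by
    refine per_congr hp hWper ?_
    refine (ZMod.natCast_eq_natCast_iff' _ _ _).mp ?_
    have hc1 : ((t * (p - 1) + 1 : ℕ) : ZMod p) = (t : ZMod p) * ((p : ZMod p) - 1) + 1 := by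
      rw [Nat.cast_add, Nat.cast_mul, Nat.cast_sub hp, Nat.cast_one]
    have hc2 : ((m + 1 + p - i % p : ℕ) : ZMod p) =
        (m : ZMod p) + 1 + (p : ZMod p) - (r : ZMod p) := by
      rw [Nat.cast_sub (by omega : i % p ≤ m + 1 + p), Nat.cast_add, Nat.cast_add,
        Nat.cast_one, hrdef]
    have hc3 : (t : ZMod p) + (m : ZMod p) = (r : ZMod p) + ((m : ZMod p) + 1) * (p : ZMod p) := by
      have := congrArg (fun n : ℕ => (n : ZMod p)) htm
      push_cast at this
      exact_mod_cast this
    have hp0 : (p : ZMod p) = 0 := ZMod.natCast_self p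
    rw [hc1, hc2, hp0]
    rw [hp0] at hc3
    ring_nf
    ring_nf at hc3
    linear_combination -hc3
  rw [e1, e2, e3]

end ZigzagAux

/-- the set `𝒵(F)` of zigzags meeting a face `F` consists of at
most three pairs `{Z, Z⁻¹}` of mutually reversed zigzags. -/
theorem zigzags_through_face_at_most_three_pairs
    {V : Type} [Fintype V] [DecidableEq V]
    (T : Triangulation V) (F : Finset V) (hF : F ∈ T.faces) :
    ∃ Z₁ Z₂ Z₃ : T.Zigzag, ∀ Z : T.Zigzag, Z.Meets F →
      (Z.Equiv Z₁ ∨ Z.IsReverseOf Z₁) ∨ (Z.Equiv Z₂ ∨ Z.IsReverseOf Z₂) ∨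
      (Z.Equiv Z₃ ∨ Z.IsReverseOf Z₃) := by
  classical
  obtain ⟨x, y, z, hxy, hxz, hyz, hFxyz⟩ := Finset.card_eq_three.mp (T.card_eq F hF)
  have hsub1 : ({x, y} : Finset V) ⊆ F := by
    rw [hFxyz]; intro t ht; simp only [Finset.mem_insert, Finset.mem_singleton] at ht ⊢; tauto
  have hsub2 : ({y, z} : Finset V) ⊆ F := by
    rw [hFxyz]; intro t ht; simp only [Finset.mem_insert, Finset.mem_singleton] at ht ⊢; tauto
  have hsub3 : ({x, z} : Finset V) ⊆ F := by
    rw [hFxyz]; intro t ht; simp only [Finset.mem_insert, Finset.mem_singleton] at ht ⊢; tauto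
  have hE1 : T.IsEdge {x, y} := ⟨Finset.card_pair hxy, F, hF, hsub1⟩
  have hE2 : T.IsEdge {y, z} := ⟨Finset.card_pair hyz, F, hF, hsub2⟩
  have hE3 : T.IsEdge {x, z} := ⟨Finset.card_pair hxz, F, hF, hsub3⟩
  have hne12 : ({x, y} : Finset V) ≠ {y, z} := by
    intro h
    have : x ∈ ({y, z} : Finset V) := h ▸ (by simp)
    simp only [Finset.mem_insert, Finset.mem_singleton] at this
    tauto
  have hne23 : ({y, z} : Finset V) ≠ {x, z} := by
    intro h
    have : y ∈ ({x, z} : Finset V) := h ▸ (by simp)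
    simp only [Finset.mem_insert, Finset.mem_singleton] at this
    tauto
  have hne31 : ({x, z} : Finset V) ≠ {x, y} := by
    intro h
    have : z ∈ ({x, y} : Finset V) := h ▸ (by simp)
    simp only [Finset.mem_insert, Finset.mem_singleton] at this
    tauto
  have hinv12 : ZigzagAux.Inv T ({x, y}, {y, z}) :=
    ⟨hE1, hE2, hne12, ⟨y, by simp⟩, F, hF, hsub1, hsub2⟩
  have hinv23 : ZigzagAux.Inv T ({y, z}, {x, z}) :=
    ⟨hE2, hE3, hne23, ⟨z, by simp⟩, F, hF, hsub2, hsub3⟩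
  have hinv31 : ZigzagAux.Inv T ({x, z}, {x, y}) :=
    ⟨hE3, hE1, hne31, ⟨x, by simp⟩, F, hF, hsub3, hsub1⟩
  refine ⟨ZigzagAux.mk T ⟨_, hinv12⟩, ZigzagAux.mk T ⟨_, hinv23⟩,
    ZigzagAux.mk T ⟨_, hinv31⟩, ?_⟩
  intro Z hZ
  obtain ⟨m, hm1, hm2⟩ := ZigzagAux.meets_pair T Z F hF hZ
  have hcard : ∀ k, (Z.seq k).card = 2 := fun k => (Z.isZigzag.1 k).1
  have hFsub : ∀ k, Z.seq k ⊆ F → Z.seq k ⊆ ({x, y, z} : Finset V) := fun k h => hFxyz ▸ h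
  have ha := ZigzagAux.edge_sub_cases hxy hxz hyz (hcard m) (hFsub m hm1)
  have hb := ZigzagAux.edge_sub_cases hxy hxz hyz (hcard (m + 1)) (hFsub (m + 1) hm2)
  have hne : Z.seq m ≠ Z.seq (m + 1) := (Z.isZigzag.2.1 m).1
  rcases ha with h | h | h <;> rcases hb with h' | h' | h'
  · exact absurd (h.trans h'.symm) hne
  · refine Or.inl (Or.inl (ZigzagAux.equiv_of T Z _ m ?_ ?_))
    · rw [ZigzagAux.mk_seq_zero]; exact h.symm
    · rw [ZigzagAux.mk_seq_one]; exact h'.symm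
  · refine Or.inr (Or.inr (Or.inr (ZigzagAux.rev_of T Z _ m ?_ ?_)))
    · rw [ZigzagAux.mk_seq_one]; exact h
    · rw [ZigzagAux.mk_seq_zero]; exact h'
  · refine Or.inl (Or.inr (ZigzagAux.rev_of T Z _ m ?_ ?_))
    · rw [ZigzagAux.mk_seq_one]; exact h
    · rw [ZigzagAux.mk_seq_zero]; exact h'
  · exact absurd (h.trans h'.symm) hne
  · refine Or.inr (Or.inl (Or.inl (ZigzagAux.equiv_of T Z _ m ?_ ?_)))
    · rw [ZigzagAux.mk_seq_zero]; exact h.symm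
    · rw [ZigzagAux.mk_seq_one]; exact h'.symm
  · refine Or.inr (Or.inr (Or.inl (ZigzagAux.equiv_of T Z _ m ?_ ?_)))
    · rw [ZigzagAux.mk_seq_zero]; exact h.symm
    · rw [ZigzagAux.mk_seq_one]; exact h'.symm
  · refine Or.inr (Or.inl (Or.inr (ZigzagAux.rev_of T Z _ m ?_ ?_)))
    · rw [ZigzagAux.mk_seq_one]; exact h
    · rw [ZigzagAux.mk_seq_zero]; exact h'
  · exact absurd (h.trans h'.symm) hne
end

section
/- Let F be a face belonging to the face shadow F₁,...,Fₙ of a zigzag Z in a triangulation. Then there are at most three distinct indices i with F_i = F. If the triangulation is locally z-knotted in F (i.e., Z(F) = {Z, Z⁻¹}), then there are exactly three such indices. -/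
open Finset

section FaceShadowAux

set_option linter.unusedSectionVars false

open scoped Classical

open Finset

variable {V : Type} [Fintype V] [DecidableEq V] {T : Triangulation V}

lemma fsa_card_inter_one {e e' : Finset V} (he : e.card = 2) (he' : e'.card = 2)
    (hne : e ≠ e') (hnon : (e ∩ e').Nonempty) : (e ∩ e').card = 1 := by
  have h1 : 1 ≤ (e ∩ e').card := Finset.card_pos.2 hnon
  have h2 : (e ∩ e').card ≤ 2 := le_trans (Finset.card_le_card Finset.inter_subset_left) he.le
  rcases Nat.lt_or_ge (e ∩ e').card 2 with h | h
  · omega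
  · exfalso
    have h3 : e ∩ e' = e :=
      Finset.eq_of_subset_of_card_le Finset.inter_subset_left (by omega)
    have h4 : e ⊆ e' := by rw [← h3]; exact Finset.inter_subset_right
    exact hne (Finset.eq_of_subset_of_card_le h4 (by omega))

lemma fsa_card_union_three {e e' : Finset V} (he : e.card = 2) (he' : e'.card = 2)
    (hne : e ≠ e') (hnon : (e ∩ e').Nonempty) : (e ∪ e').card = 3 := by
  have h1 := Finset.card_union_add_card_inter e e'
  have h2 := fsa_card_inter_one he he' hne hnon
  omega

lemma fsa_face_eq {e e' F : Finset V} (hF : F ∈ T.faces) (h1 : e ⊆ F) (h2 : e' ⊆ F)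
    (he : e.card = 2) (he' : e'.card = 2) (hne : e ≠ e') (hnon : (e ∩ e').Nonempty) :
    F = e ∪ e' := by
  have hsub : e ∪ e' ⊆ F := Finset.union_subset h1 h2
  have hc := T.card_eq F hF
  exact (Finset.eq_of_subset_of_card_le hsub
    (by rw [fsa_card_union_three he he' hne hnon]; omega)).symm

lemma fsa_card_inter_one' {e A : Finset V} (he : e.card = 2) (hns : ¬ e ⊆ A)
    (hnon : (e ∩ A).Nonempty) : (e ∩ A).card = 1 := by
  have h1 : 1 ≤ (e ∩ A).card := Finset.card_pos.2 hnon
  have h2 : (e ∩ A).card ≤ 2 := le_trans (Finset.card_le_card Finset.inter_subset_left) he.le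
  rcases Nat.lt_or_ge (e ∩ A).card 2 with h | h
  · omega
  · exfalso
    have h3 : e ∩ A = e :=
      Finset.eq_of_subset_of_card_le Finset.inter_subset_left (by omega)
    exact hns (by rw [← h3]; exact Finset.inter_subset_right)

variable {f : ℕ → Finset V}

lemma fsa_union_mem (h : T.IsZigzagSeq f) (i : ℕ) : f i ∪ f (i + 1) ∈ T.faces := by
  obtain ⟨G, hG, hG1, hG2⟩ := (h.2.1 i).2.2
  have := fsa_face_eq hG hG1 hG2 (h.1 i).1 (h.1 (i + 1)).1 (h.2.1 i).1 (h.2.1 i).2.1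
  rw [← this]; exact hG

lemma fsa_union_ne (h : T.IsZigzagSeq f) (i : ℕ) :
    f i ∪ f (i + 1) ≠ f (i + 1) ∪ f (i + 2) :=
  h.2.2.1 i _ (fsa_union_mem h i) _ (fsa_union_mem h (i + 1))
    Finset.subset_union_left Finset.subset_union_right
    Finset.subset_union_left Finset.subset_union_right

lemma fsa_not_next2_subset (h : T.IsZigzagSeq f) (i : ℕ) : ¬ f (i + 2) ⊆ f i ∪ f (i + 1) := by
  intro hsub
  exact h.2.2.1 i _ (fsa_union_mem h i) _ (fsa_union_mem h i)
    Finset.subset_union_left Finset.subset_union_right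
    Finset.subset_union_right hsub rfl

lemma fsa_not_prev_subset (h : T.IsZigzagSeq f) (i : ℕ) : ¬ f i ⊆ f (i + 1) ∪ f (i + 2) := by
  intro hsub
  exact h.2.2.1 i _ (fsa_union_mem h (i + 1)) _ (fsa_union_mem h (i + 1))
    hsub Finset.subset_union_left
    Finset.subset_union_left Finset.subset_union_right rfl

lemma fsa_next_eq_sdiff (h : T.IsZigzagSeq f) (i : ℕ) :
    f (i + 2) = (f (i + 1) ∪ f (i + 2)) \ f i := by
  have hA : f (i + 1) ∪ f (i + 2) ∈ T.faces := fsa_union_mem h (i + 1)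
  have hcA : (f (i + 1) ∪ f (i + 2)).card = 3 := T.card_eq _ hA
  have hnon : (f i ∩ (f (i + 1) ∪ f (i + 2))).Nonempty := by
    obtain ⟨x, hx⟩ := (h.2.1 i).2.1
    exact ⟨x, Finset.mem_inter.2 ⟨(Finset.mem_inter.1 hx).1,
      Finset.mem_union_left _ (Finset.mem_inter.1 hx).2⟩⟩
  have hint : (f i ∩ (f (i + 1) ∪ f (i + 2))).card = 1 :=
    fsa_card_inter_one' (h.1 i).1 (fsa_not_prev_subset h i) hnon
  have hsd := Finset.card_inter_add_card_sdiff (f (i + 1) ∪ f (i + 2)) (f i)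
  rw [Finset.inter_comm] at hsd
  have hcard2 : ((f (i + 1) ∪ f (i + 2)) \ f i).card = 2 := by omega
  apply Finset.eq_of_subset_of_card_le
  · rw [Finset.subset_sdiff]
    refine ⟨Finset.subset_union_right, ?_⟩
    rw [Finset.disjoint_iff_inter_eq_empty, Finset.inter_comm]
    exact h.2.2.2 i
  · rw [hcard2, (h.1 (i + 2)).1]

lemma fsa_prev_eq_sdiff (h : T.IsZigzagSeq f) (i : ℕ) :
    f i = (f i ∪ f (i + 1)) \ f (i + 2) := by
  have hA : f i ∪ f (i + 1) ∈ T.faces := fsa_union_mem h i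
  have hcA : (f i ∪ f (i + 1)).card = 3 := T.card_eq _ hA
  have hnon : (f (i + 2) ∩ (f i ∪ f (i + 1))).Nonempty := by
    obtain ⟨x, hx⟩ := (h.2.1 (i + 1)).2.1
    exact ⟨x, Finset.mem_inter.2 ⟨(Finset.mem_inter.1 hx).2,
      Finset.mem_union_right _ (Finset.mem_inter.1 hx).1⟩⟩
  have hint : (f (i + 2) ∩ (f i ∪ f (i + 1))).card = 1 :=
    fsa_card_inter_one' (h.1 (i + 2)).1 (fsa_not_next2_subset h i) hnon
  have hsd := Finset.card_inter_add_card_sdiff (f i ∪ f (i + 1)) (f (i + 2))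
  rw [Finset.inter_comm] at hsd
  have hcard2 : ((f i ∪ f (i + 1)) \ f (i + 2)).card = 2 := by omega
  apply Finset.eq_of_subset_of_card_le
  · rw [Finset.subset_sdiff]
    refine ⟨Finset.subset_union_left, ?_⟩
    rw [Finset.disjoint_iff_inter_eq_empty]
    exact h.2.2.2 i
  · rw [hcard2, (h.1 i).1]

lemma fsa_two_faces {e A B C : Finset V} (he : e.card = 2) (hA : A ∈ T.faces)
    (hB : B ∈ T.faces) (hC : C ∈ T.faces) (heA : e ⊆ A) (heB : e ⊆ B) (heC : e ⊆ C)
    (hBA : B ≠ A) (hCA : C ≠ A) : B = C := by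
  have h2 := T.edge_two_faces e he ⟨A, hA, heA⟩
  obtain ⟨x, y, hxy, hs⟩ := Finset.card_eq_two.1 h2
  have hmem : ∀ {D : Finset V}, D ∈ T.faces → e ⊆ D → D = x ∨ D = y := by
    intro D hD heD
    have : D ∈ T.faces.filter (fun G => e ⊆ G) := Finset.mem_filter.2 ⟨hD, heD⟩
    rw [hs] at this
    simpa using this
  rcases hmem hA heA with hA' | hA' <;> rcases hmem hB heB with hB' | hB' <;>
    rcases hmem hC heC with hC' | hC' <;> simp_all

lemma fsa_det_fwd (h : T.IsZigzagSeq f) {a b : ℕ} (h0 : f a = f b)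
    (h1 : f (a + 1) = f (b + 1)) : f (a + 2) = f (b + 2) := by
  have hU : f a ∪ f (a + 1) = f b ∪ f (b + 1) := by rw [h0, h1]
  have hG : f (a + 1) ∪ f (a + 2) = f (b + 1) ∪ f (b + 2) := by
    refine fsa_two_faces (h.1 (a + 1)).1 (fsa_union_mem h a) (fsa_union_mem h (a + 1))
      (fsa_union_mem h (b + 1)) Finset.subset_union_right Finset.subset_union_left ?_
      (fsa_union_ne h a).symm ?_
    · rw [h1]; exact Finset.subset_union_left
    · rw [hU]; exact (fsa_union_ne h b).symm
  rw [fsa_next_eq_sdiff h a, fsa_next_eq_sdiff h b, hG, h0]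

lemma fsa_det_bwd (h : T.IsZigzagSeq f) {a b : ℕ} (h1 : f (a + 1) = f (b + 1))
    (h2 : f (a + 2) = f (b + 2)) : f a = f b := by
  have hU : f (a + 1) ∪ f (a + 2) = f (b + 1) ∪ f (b + 2) := by rw [h1, h2]
  have hG : f a ∪ f (a + 1) = f b ∪ f (b + 1) := by
    refine fsa_two_faces (h.1 (a + 1)).1 (fsa_union_mem h (a + 1)) (fsa_union_mem h a)
      (fsa_union_mem h b) Finset.subset_union_left Finset.subset_union_right ?_
      (fsa_union_ne h a) ?_
    · rw [h1]; exact Finset.subset_union_right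
    · rw [hU]; exact fsa_union_ne h b
  rw [fsa_prev_eq_sdiff h a, fsa_prev_eq_sdiff h b, hG, h2]

lemma fsa_det_rev (h : T.IsZigzagSeq f) {a b : ℕ} (h0 : f a = f (b + 2))
    (h1 : f (a + 1) = f (b + 1)) : f (a + 2) = f b := by
  have hU : f a ∪ f (a + 1) = f (b + 1) ∪ f (b + 2) := by
    rw [h0, h1, Finset.union_comm]
  have hG : f (a + 1) ∪ f (a + 2) = f b ∪ f (b + 1) := by
    refine fsa_two_faces (h.1 (a + 1)).1 (fsa_union_mem h a) (fsa_union_mem h (a + 1))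
      (fsa_union_mem h b) Finset.subset_union_right Finset.subset_union_left ?_
      (fsa_union_ne h a).symm ?_
    · rw [h1]; exact Finset.subset_union_right
    · rw [hU]; exact fsa_union_ne h b
  rw [fsa_next_eq_sdiff h a, fsa_prev_eq_sdiff h b, hG, h0]

end FaceShadowAux
section FaceShadowAux2

set_option linter.unusedSectionVars false

open scoped Classical

open Finset

variable {V : Type} [Fintype V] [DecidableEq V] {T : Triangulation V}

lemma fsa_seq_add_mul (Z : T.Zigzag) (k : ℕ) :
    ∀ n, Z.seq (k + n * Z.period) = Z.seq k
  | 0 => by simp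
  | n + 1 => by
      rw [Nat.succ_mul, ← Nat.add_assoc, Z.periodic, fsa_seq_add_mul Z k n]

lemma fsa_seq_mod (Z : T.Zigzag) (k : ℕ) : Z.seq (k % Z.period) = Z.seq k := by
  conv_rhs => rw [← Nat.mod_add_div' k Z.period]
  exact (fsa_seq_add_mul Z (k % Z.period) (k / Z.period)).symm

lemma fsa_seq_congr (Z : T.Zigzag) {a b : ℕ} (hab : a % Z.period = b % Z.period) :
    Z.seq a = Z.seq b := by
  rw [← fsa_seq_mod Z a, hab, fsa_seq_mod Z b]

lemma fsa_two_le_period (Z : T.Zigzag) : 2 ≤ Z.period := by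
  rcases Nat.lt_or_ge Z.period 2 with hp | hp
  · exfalso
    have hpos := Z.period_pos
    have h1 : Z.period = 1 := by omega
    have h2 := Z.periodic 0
    rw [h1] at h2
    exact (Z.isZigzag.2.1 0).1 h2.symm
  · exact hp

lemma fsa_flag_inj_aux (Z : T.Zigzag) {i j : ℕ} (hij : i ≤ j) (hj : j < Z.period)
    (h0 : Z.seq i = Z.seq j) (h1 : Z.seq (i + 1) = Z.seq (j + 1)) : i = j := by
  by_contra hne
  set m := j - i with hm
  have hmpos : 0 < m := by omega
  have key : ∀ k, Z.seq (i + k + m) = Z.seq (i + k) ∧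
      Z.seq (i + k + 1 + m) = Z.seq (i + k + 1) := by
    intro k
    induction k with
    | zero =>
        constructor
        · rw [show i + 0 + m = j by omega, show i + 0 = i from rfl]; exact h0.symm
        · rw [show i + 0 + 1 + m = j + 1 by omega, show i + 0 + 1 = i + 1 from rfl]
          exact h1.symm
    | succ k ih =>
        refine ⟨by rw [show i + (k + 1) = i + k + 1 by omega]; exact ih.2, ?_⟩
        have := fsa_det_fwd Z.isZigzag (a := i + k + m) (b := i + k) ih.1
          (by rw [show i + k + m + 1 = i + k + 1 + m by omega]; exact ih.2)
        rw [show i + (k + 1) + 1 + m = i + k + m + 2 by omega,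
          show i + (k + 1) + 1 = i + k + 2 by omega]
        exact this
  have hall : ∀ k, Z.seq (k + m) = Z.seq k := by
    intro k
    have hip : i ≤ i * Z.period := Nat.le_mul_of_pos_right i Z.period_pos
    have h1' : Z.seq (k + m) = Z.seq (k + m + i * Z.period) :=
      (fsa_seq_add_mul Z (k + m) i).symm
    have h2' : Z.seq (k + i * Z.period) = Z.seq k := fsa_seq_add_mul Z k i
    have h3' := (key (k + i * Z.period - i)).1
    rw [show i + (k + i * Z.period - i) = k + i * Z.period by omega] at h3'
    rw [h1', show k + m + i * Z.period = k + i * Z.period + m by omega, h3', h2']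
  have := Z.period_min m hmpos hall
  omega

lemma fsa_flag_inj (Z : T.Zigzag) {i j : ℕ} (hi : i < Z.period) (hj : j < Z.period)
    (h0 : Z.seq i = Z.seq j) (h1 : Z.seq (i + 1) = Z.seq (j + 1)) : i = j := by
  rcases le_total i j with h | h
  · exact fsa_flag_inj_aux Z h hj h0 h1
  · exact (fsa_flag_inj_aux Z h hi h0.symm h1.symm).symm

lemma fsa_no_pal_aux (Z : T.Zigzag) {i j : ℕ} (hji : j ≤ i)
    (h0 : Z.seq j = Z.seq (i + 1)) (h1 : Z.seq (j + 1) = Z.seq i) : False := by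
  have h := Z.isZigzag
  have key : ∀ k, (k ≤ i + 1 → Z.seq (j + k) = Z.seq (i + 1 - k)) ∧
      (k + 1 ≤ i + 1 → Z.seq (j + k + 1) = Z.seq (i + 1 - (k + 1))) := by
    intro k
    induction k with
    | zero =>
        refine ⟨fun _ => by simpa using h0, fun _ => ?_⟩
        rw [show i + 1 - (0 + 1) = i by omega, show j + 0 + 1 = j + 1 from rfl]
        exact h1
    | succ k ih =>
        refine ⟨fun hk => by
          rw [show j + (k + 1) = j + k + 1 by omega]; exact ih.2 hk, fun hk => ?_⟩
        have hk2 : k + 2 ≤ i + 1 := hk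
        have e0 : Z.seq (j + k) = Z.seq (i - k - 1 + 2) := by
          rw [show i - k - 1 + 2 = i + 1 - k by omega]
          exact ih.1 (by omega)
        have e1 : Z.seq (j + k + 1) = Z.seq (i - k - 1 + 1) := by
          rw [show i - k - 1 + 1 = i + 1 - (k + 1) by omega]
          exact ih.2 (by omega)
        have := fsa_det_rev h (a := j + k) (b := i - k - 1) e0 e1
        rw [show j + (k + 1) + 1 = j + k + 2 by omega,
          show i + 1 - (k + 1 + 1) = i - k - 1 by omega]
        exact this
  rcases Nat.even_or_odd (i - j) with ⟨k, hk⟩ | ⟨k, hk⟩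
  · have h2 := (key k).1 (by omega)
    rw [show i + 1 - k = j + k + 1 by omega] at h2
    exact (h.2.1 (j + k)).1 h2
  · have h2 := (key k).1 (by omega)
    rw [show i + 1 - k = j + k + 2 by omega] at h2
    have h3 := h.2.2.2 (j + k)
    rw [← h2, Finset.inter_self] at h3
    have h4 := (h.1 (j + k)).1
    rw [h3] at h4
    simp at h4

lemma fsa_no_pal (Z : T.Zigzag) {i j : ℕ}
    (h0 : Z.seq j = Z.seq (i + 1)) (h1 : Z.seq (j + 1) = Z.seq i) : False := by
  rcases le_total j i with h | h
  · exact fsa_no_pal_aux Z h h0 h1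
  · exact fsa_no_pal_aux Z h h1.symm h0.symm

end FaceShadowAux2
section FaceShadowAux3

set_option linter.unusedSectionVars false
set_option linter.unreachableTactic false
set_option linter.unusedTactic false

open scoped Classical

open Finset

variable {V : Type} [Fintype V] [DecidableEq V]

/-- A valid flag: two distinct edges meeting in a vertex and spanning a face. -/
def fsaVF (T : Triangulation V) (d d' : Finset V) : Prop :=
  d.card = 2 ∧ d'.card = 2 ∧ d ≠ d' ∧ (d ∩ d').Nonempty ∧ d ∪ d' ∈ T.faces

/-- The next edge of the zigzag determined by the flag `(d, d')`. -/
noncomputable def fsaNext (T : Triangulation V) (d d' : Finset V) : Finset V :=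
  (((T.faces.filter fun G => d' ⊆ G).erase (d ∪ d')).sup id) \ d

variable {T : Triangulation V}

lemma fsaNext_spec {d d' : Finset V} (h : fsaVF T d d') :
    fsaVF T d' (fsaNext T d d') ∧ d ∩ fsaNext T d d' = ∅ ∧
      d' ∪ fsaNext T d d' ≠ d ∪ d' := by
  obtain ⟨hd, hd', hne, hnon, hface⟩ := h
  have hcard : (T.faces.filter fun G => d' ⊆ G).card = 2 :=
    T.edge_two_faces d' hd' ⟨d ∪ d', hface, Finset.subset_union_right⟩
  have hmem : d ∪ d' ∈ T.faces.filter fun G => d' ⊆ G :=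
    Finset.mem_filter.2 ⟨hface, Finset.subset_union_right⟩
  have hcard1 : ((T.faces.filter fun G => d' ⊆ G).erase (d ∪ d')).card = 1 := by
    rw [Finset.card_erase_of_mem hmem, hcard]
  obtain ⟨G, hG⟩ := Finset.card_eq_one.1 hcard1
  have hGmem : G ∈ (T.faces.filter fun G => d' ⊆ G).erase (d ∪ d') := by
    rw [hG]; exact Finset.mem_singleton_self G
  have hGne : G ≠ d ∪ d' := (Finset.mem_erase.1 hGmem).1
  have hGf : G ∈ T.faces := (Finset.mem_filter.1 (Finset.mem_erase.1 hGmem).2).1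
  have hd'G : d' ⊆ G := (Finset.mem_filter.1 (Finset.mem_erase.1 hGmem).2).2
  have hsup : fsaNext T d d' = G \ d := by
    rw [fsaNext, hG, Finset.sup_singleton]; rfl
  have hGc : G.card = 3 := T.card_eq G hGf
  have hnsub : ¬ d ⊆ G := by
    intro hsub
    exact hGne (fsa_face_eq hGf hsub hd'G hd hd' hne hnon)
  have hnonG : (d ∩ G).Nonempty := by
    obtain ⟨x, hx⟩ := hnon
    exact ⟨x, Finset.mem_inter.2 ⟨(Finset.mem_inter.1 hx).1,
      hd'G (Finset.mem_inter.1 hx).2⟩⟩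
  have hintG : (d ∩ G).card = 1 := fsa_card_inter_one' hd hnsub hnonG
  have hsd := Finset.card_inter_add_card_sdiff G d
  rw [Finset.inter_comm] at hsd
  have hGd2 : (G \ d).card = 2 := by omega
  have hdisj : d ∩ (G \ d) = ∅ := by
    ext x; simp only [Finset.mem_inter, Finset.mem_sdiff, Finset.notMem_empty, iff_false]
    tauto
  have hdd' : (d ∩ d').card = 1 := fsa_card_inter_one hd hd' hne hnon
  have hddG : d ∩ d' = d ∩ G := by
    apply Finset.eq_of_subset_of_card_le
    · exact Finset.inter_subset_inter Finset.Subset.rfl hd'G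
    · omega
  have hunion : d' ∪ (G \ d) = G := by
    apply Finset.Subset.antisymm
    · exact Finset.union_subset hd'G Finset.sdiff_subset
    · intro x hx
      by_cases hxd : x ∈ d
      · have : x ∈ d ∩ d' := by rw [hddG]; exact Finset.mem_inter.2 ⟨hxd, hx⟩
        exact Finset.mem_union_left _ (Finset.mem_inter.1 this).2
      · exact Finset.mem_union_right _ (Finset.mem_sdiff.2 ⟨hx, hxd⟩)
  have hd'ne : d' ≠ G \ d := by
    intro hcon
    obtain ⟨x, hx⟩ := hnon
    have hx1 := (Finset.mem_inter.1 hx).1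
    have hx2 := (Finset.mem_inter.1 hx).2
    rw [hcon] at hx2
    exact (Finset.mem_sdiff.1 hx2).2 hx1
  have hd'non : (d' ∩ (G \ d)).Nonempty := by
    have hsd' := Finset.card_inter_add_card_sdiff d' d
    rw [Finset.inter_comm] at hsd'
    have : (d' \ d).card = 1 := by omega
    obtain ⟨x, hx⟩ := Finset.card_pos.1 (by omega : 0 < (d' \ d).card)
    have hx1 := (Finset.mem_sdiff.1 hx).1
    have hx2 := (Finset.mem_sdiff.1 hx).2
    exact ⟨x, Finset.mem_inter.2 ⟨hx1, Finset.mem_sdiff.2 ⟨hd'G hx1, hx2⟩⟩⟩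
  rw [hsup]
  refine ⟨⟨hd', hGd2, hd'ne, hd'non, by rw [hunion]; exact hGf⟩, hdisj, ?_⟩
  rw [hunion]
  exact hGne

/-- The zigzag sequence generated by an initial flag. -/
noncomputable def fsaSeq (T : Triangulation V) (e e' : Finset V) : ℕ → Finset V
  | 0 => e
  | 1 => e'
  | n + 2 => fsaNext T (fsaSeq T e e' n) (fsaSeq T e e' (n + 1))

lemma fsaSeq_vf {e e' : Finset V} (he : fsaVF T e e') :
    ∀ n, fsaVF T (fsaSeq T e e' n) (fsaSeq T e e' (n + 1))
  | 0 => he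
  | n + 1 => (fsaNext_spec (fsaSeq_vf he n)).1

lemma fsaSeq_zig {e e' : Finset V} (he : fsaVF T e e') :
    T.IsZigzagSeq (fsaSeq T e e') := by
  set g := fsaSeq T e e' with hg
  have vf : ∀ n, fsaVF T (g n) (g (n + 1)) := fsaSeq_vf he
  have hstep : ∀ n, g n ∩ g (n + 2) = ∅ ∧ g (n + 1) ∪ g (n + 2) ≠ g n ∪ g (n + 1) := by
    intro n
    have h := fsaNext_spec (vf n)
    exact ⟨h.2.1, h.2.2⟩
  refine ⟨?_, ?_, ?_, ?_⟩
  · intro i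
    exact ⟨(vf i).1, ⟨g i ∪ g (i + 1), (vf i).2.2.2.2, Finset.subset_union_left⟩⟩
  · intro i
    exact ⟨(vf i).2.2.1, (vf i).2.2.2.1,
      ⟨g i ∪ g (i + 1), (vf i).2.2.2.2, Finset.subset_union_left,
        Finset.subset_union_right⟩⟩
  · intro i A hA B hB h1 h2 h3 h4
    have hAe : A = g i ∪ g (i + 1) :=
      fsa_face_eq hA h1 h2 (vf i).1 (vf i).2.1 (vf i).2.2.1 (vf i).2.2.2.1
    have hBe : B = g (i + 1) ∪ g (i + 2) :=
      fsa_face_eq hB h3 h4 (vf (i + 1)).1 (vf (i + 1)).2.1 (vf (i + 1)).2.2.1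
        (vf (i + 1)).2.2.2.1
    rw [hAe, hBe]
    exact fun hcon => (hstep i).2 hcon.symm
  · intro i
    exact (hstep i).1

lemma fsa_periodic_of_flag_eq {f : ℕ → Finset V} (hzig : T.IsZigzagSeq f) {a d : ℕ}
    (h0 : f a = f (a + d)) (h1 : f (a + 1) = f (a + 1 + d)) :
    ∀ i, f (i + d) = f i := by
  have bwd : ∀ j, j ≤ a → f (a - j) = f (a - j + d) ∧ f (a - j + 1) = f (a - j + 1 + d) := by
    intro j
    induction j with
    | zero => exact fun _ => ⟨by simpa using h0, by simpa using h1⟩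
    | succ j ih =>
        intro hj
        have ih' := ih (by omega)
        have e1 : f (a - j - 1 + 1) = f (a - j - 1 + d + 1) := by
          have h' := ih'.1; convert h' using 2 <;> omega
        have e2 : f (a - j - 1 + 2) = f (a - j - 1 + d + 2) := by
          have h' := ih'.2; convert h' using 2 <;> omega
        have h3 := fsa_det_bwd hzig (a := a - j - 1) (b := a - j - 1 + d) e1 e2
        constructor
        · convert h3 using 2 <;> omega
        · have h' := ih'.1; convert h' using 2 <;> omega
  have base := bwd a le_rfl
  rw [Nat.sub_self] at base
  have fwd : ∀ k, f k = f (k + d) ∧ f (k + 1) = f (k + 1 + d) := by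
    intro k
    induction k with
    | zero => exact ⟨by simpa using base.1, by simpa using base.2⟩
    | succ k ih =>
        refine ⟨ih.2, ?_⟩
        have := fsa_det_fwd hzig (a := k) (b := k + d) ih.1
          (by rw [show k + d + 1 = k + 1 + d by omega]; exact ih.2)
        rw [show k + 1 + 1 = k + 2 by omega, show k + 1 + 1 + d = k + d + 2 by omega]
        exact this
  exact fun i => ((fwd i).1).symm

lemma fsa_exists_zigzag {e e' : Finset V} (he : fsaVF T e e') :
    ∃ Z : T.Zigzag, Z.seq 0 = e ∧ Z.seq 1 = e' := by
  classical
  set g := fsaSeq T e e' with hg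
  have hzig : T.IsZigzagSeq g := fsaSeq_zig he
  obtain ⟨a, b, hab, heq⟩ :=
    Finite.exists_ne_map_eq_of_infinite (fun n => (g n, g (n + 1)))
  have heq1 : g a = g b := congrArg Prod.fst heq
  have heq2 : g (a + 1) = g (b + 1) := congrArg Prod.snd heq
  have hper : ∃ d, 0 < d ∧ ∀ i, g (i + d) = g i := by
    rcases Nat.lt_or_ge a b with h | h
    · refine ⟨b - a, by omega, fsa_periodic_of_flag_eq hzig (a := a) ?_ ?_⟩
      · rw [show a + (b - a) = b by omega]; exact heq1
      · rw [show a + 1 + (b - a) = b + 1 by omega]; exact heq2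
    · have h' : b < a := by omega
      refine ⟨a - b, by omega, fsa_periodic_of_flag_eq hzig (a := b) ?_ ?_⟩
      · rw [show b + (a - b) = a by omega]; exact heq1.symm
      · rw [show b + 1 + (a - b) = a + 1 by omega]; exact heq2.symm
  have hQ : ∃ m, 0 < m ∧ ∀ i, g (i + m) = g i := hper
  refine ⟨⟨g, Nat.find hQ, (Nat.find_spec hQ).1, (Nat.find_spec hQ).2,
    fun m hm h' => Nat.find_min' hQ ⟨hm, h'⟩, hzig⟩, rfl, rfl⟩

end FaceShadowAux3
open scoped Classical in
/-- a face `F` occurs at most three times in the face shadow of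
any zigzag, and exactly three times if the triangulation is locally
z-knotted in `F`. -/
theorem face_shadow_occurrences {V : Type} [Fintype V] [DecidableEq V]
    (T : Triangulation V) (Z : T.Zigzag) (F : Finset V) (hF : F ∈ T.faces)
    (hmem : ∃ i, Z.ShadowAt i F) :
    ((Finset.range Z.period).filter fun i => Z.ShadowAt i F).card ≤ 3 ∧
    (T.LocallyZKnotted F →
      ((Finset.range Z.period).filter fun i => Z.ShadowAt i F).card = 3) := by
  have hzig := Z.isZigzag
  have hFc : F.card = 3 := T.card_eq F hF
  have hDcard : ((F.powersetCard 2).powersetCard 2).card = 3 := by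
    rw [Finset.card_powersetCard, Finset.card_powersetCard, hFc]
    decide
  set m : ℕ → Finset (Finset V) := fun i => {Z.seq i, Z.seq (i + 1)} with hm
  have hmaps : ∀ i ∈ (Finset.range Z.period).filter fun i => Z.ShadowAt i F,
      m i ∈ (F.powersetCard 2).powersetCard 2 := by
    intro i hi
    obtain ⟨-, hsh⟩ := Finset.mem_filter.1 hi
    refine Finset.mem_powersetCard.2 ⟨?_, Finset.card_pair (hzig.2.1 i).1⟩
    intro x hx
    rcases Finset.mem_insert.1 hx with hx | hx
    · exact Finset.mem_powersetCard.2 ⟨hx ▸ hsh.2.1, hx ▸ (hzig.1 i).1⟩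
    · rw [Finset.mem_singleton] at hx
      exact Finset.mem_powersetCard.2 ⟨hx ▸ hsh.2.2, hx ▸ (hzig.1 (i + 1)).1⟩
  have hinj : Set.InjOn m ((Finset.range Z.period).filter fun i => Z.ShadowAt i F) := by
    intro i hi j hj heq
    have hi' := Finset.mem_range.1 (Finset.mem_filter.1 (Finset.mem_coe.1 hi)).1
    have hj' := Finset.mem_range.1 (Finset.mem_filter.1 (Finset.mem_coe.1 hj)).1
    have heq' : ({Z.seq i, Z.seq (i + 1)} : Finset (Finset V)) =
        ({Z.seq j, Z.seq (j + 1)} : Finset (Finset V)) := heq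
    have h1 : Z.seq i ∈ ({Z.seq j, Z.seq (j + 1)} : Finset (Finset V)) := by
      rw [← heq']; exact Finset.mem_insert_self _ _
    have h2 : Z.seq (i + 1) ∈ ({Z.seq j, Z.seq (j + 1)} : Finset (Finset V)) := by
      rw [← heq']; exact Finset.mem_insert_of_mem (Finset.mem_singleton_self _)
    rcases Finset.mem_insert.1 h1 with hA | hA
    · rcases Finset.mem_insert.1 h2 with hB | hB
      · exact absurd (hA ▸ hB : Z.seq (i + 1) = Z.seq i) (hzig.2.1 i).1.symm
      · rw [Finset.mem_singleton] at hB
        exact fsa_flag_inj Z hi' hj' hA hB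
    · rw [Finset.mem_singleton] at hA
      rcases Finset.mem_insert.1 h2 with hB | hB
      · exact (fsa_no_pal Z hB.symm hA.symm).elim
      · rw [Finset.mem_singleton] at hB
        exact absurd (hA ▸ hB : Z.seq (i + 1) = Z.seq i) (hzig.2.1 i).1.symm
  have hle : ((Finset.range Z.period).filter fun i => Z.ShadowAt i F).card ≤ 3 :=
    hDcard ▸ Finset.card_le_card_of_injOn m hmaps hinj
  refine ⟨hle, fun hLZ => ?_⟩
  have hZF : Z.Meets F := by
    obtain ⟨i0, hi0⟩ := hmem
    exact ⟨i0, hi0.2.1⟩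
  have hp2 : 2 ≤ Z.period := fsa_two_le_period Z
  have hsurj : (F.powersetCard 2).powersetCard 2 ⊆
      ((Finset.range Z.period).filter fun i => Z.ShadowAt i F).image m := by
    intro pr hpr
    obtain ⟨hsub, hc⟩ := Finset.mem_powersetCard.1 hpr
    obtain ⟨e, e', hee, hpre⟩ := Finset.card_eq_two.1 hc
    have heM : e ∈ F.powersetCard 2 := hsub (hpre ▸ Finset.mem_insert_self e {e'})
    have he'M : e' ∈ F.powersetCard 2 :=
      hsub (hpre ▸ Finset.mem_insert_of_mem (Finset.mem_singleton_self e'))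
    obtain ⟨heF, hec⟩ := Finset.mem_powersetCard.1 heM
    obtain ⟨he'F, he'c⟩ := Finset.mem_powersetCard.1 he'M
    have hUsub : e ∪ e' ⊆ F := Finset.union_subset heF he'F
    have hUle : (e ∪ e').card ≤ 3 := hFc ▸ Finset.card_le_card hUsub
    have hUI := Finset.card_union_add_card_inter e e'
    have hnon : (e ∩ e').Nonempty := Finset.card_pos.1 (by omega)
    have hUF : e ∪ e' = F :=
      Finset.eq_of_subset_of_card_le hUsub
        (by rw [fsa_card_union_three hec he'c hee hnon, hFc])
    have hVF : fsaVF T e e' := ⟨hec, he'c, hee, hnon, by rw [hUF]; exact hF⟩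
    obtain ⟨Z', hZ'0, hZ'1⟩ := fsa_exists_zigzag hVF
    have hZ'F : Z'.Meets F := ⟨0, by rw [hZ'0]; exact heF⟩
    rcases hLZ.2 Z Z' hZF hZ'F with ⟨k, hk⟩ | ⟨k, hk⟩
    · have hk0 : Z.seq k = e := by rw [← hZ'0, hk 0, Nat.zero_add]
      have hk1 : Z.seq (k + 1) = e' := by rw [← hZ'1, hk 1, Nat.add_comm 1 k]
      refine Finset.mem_image.2 ⟨k % Z.period, Finset.mem_filter.2
        ⟨Finset.mem_range.2 (Nat.mod_lt _ Z.period_pos), hF, ?_, ?_⟩, ?_⟩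
      · rw [fsa_seq_mod Z k, hk0]; exact heF
      · rw [fsa_seq_congr Z (Nat.mod_add_mod k Z.period 1), hk1]; exact he'F
      · rw [hm]
        simp only
        rw [fsa_seq_mod Z k, fsa_seq_congr Z (Nat.mod_add_mod k Z.period 1), hk0, hk1]
        exact hpre.symm
    · have hk0 : Z.seq (k + Z.period) = e := by
        have := hk 0
        rw [hZ'0, Nat.zero_mod, Nat.sub_zero] at this
        exact this.symm
      have hk1 : Z.seq (k + Z.period - 1) = e' := by
        have := hk 1
        rw [hZ'1, Nat.mod_eq_of_lt (by omega)] at this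
        exact this.symm
      have hty : k + Z.period - 1 + 1 = k + Z.period := by omega
      refine Finset.mem_image.2 ⟨(k + Z.period - 1) % Z.period, Finset.mem_filter.2
        ⟨Finset.mem_range.2 (Nat.mod_lt _ Z.period_pos), hF, ?_, ?_⟩, ?_⟩
      · rw [fsa_seq_mod Z (k + Z.period - 1), hk1]; exact he'F
      · rw [fsa_seq_congr Z (Nat.mod_add_mod (k + Z.period - 1) Z.period 1), hty, hk0]
        exact heF
      · rw [hm]
        simp only
        rw [fsa_seq_mod Z (k + Z.period - 1),
          fsa_seq_congr Z (Nat.mod_add_mod (k + Z.period - 1) Z.period 1), hty,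
          hk0, hk1, Finset.pair_comm]
        exact hpre.symm
  have hge : 3 ≤ ((Finset.range Z.period).filter fun i => Z.ShadowAt i F).card := by
    calc 3 = ((F.powersetCard 2).powersetCard 2).card := hDcard.symm
      _ ≤ (((Finset.range Z.period).filter fun i => Z.ShadowAt i F).image m).card :=
          Finset.card_le_card hsurj
      _ ≤ ((Finset.range Z.period).filter fun i => Z.ShadowAt i F).card :=
          Finset.card_image_le
  omega
end
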